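/- arXiv:0809.5031 — 5 statements merged into one kernel-verified Lean document; each statement's English description precedes it below -/
import Mathlib

section
/- Let $F$ be a totally real number field of degree $d$ and fix $\delta > 0$. Then the sum over all totally positive units $\eta \in \mathcal{O}_F^{\times+}$ of $\prod_{j : |\eta^{(j)}| > 1} |\eta^{(j)}|^{-\delta}$ converges. -/
open Real NumberField NumberField.InfinitePlace NumberField.Units
open NumberField.Units.dirichletUnitTheorem

private lemma sum_exp_int_aux {a : ℝ} (ha : 0 < a) :
    Summable (fun n : ℤ => Real.exp (-a * |(n : ℝ)|)) := by
  have hnat : Summable (fun n : ℕ => Real.exp (-a * n)) := by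
    have h1 : ∀ n : ℕ, Real.exp (-a * n) = (Real.exp (-a)) ^ n := by
      intro n
      rw [← Real.exp_nat_mul]
      ring_nf
    refine (summable_geometric_of_lt_one (Real.exp_pos _).le ?_).congr fun n => (h1 n).symm
    rw [Real.exp_lt_one_iff]
    linarith
  refine Summable.of_nat_of_neg ?_ ?_
  · refine hnat.congr fun n => ?_
    rw [Int.cast_natCast, Nat.abs_cast]
  · refine hnat.congr fun n => ?_
    push_cast
    rw [abs_neg, Nat.abs_cast]

private lemma sum_prod_fin_aux {g : ℤ → ℝ} (hg0 : ∀ n, 0 ≤ g n) (hg : Summable g) :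
    ∀ N : ℕ, Summable (fun v : Fin N → ℤ => ∏ i, g (v i))
  | 0 => by
      have : Subsingleton (Fin 0 → ℤ) := ⟨fun a b => funext fun i => i.elim0⟩
      have : Finite (Fin 0 → ℤ) := Finite.of_subsingleton
      exact Summable.of_finite
  | (N + 1) => by
      have hs := sum_prod_fin_aux hg0 hg N
      have h := hg.mul_of_nonneg hs hg0 (fun v => Finset.prod_nonneg fun i _ => hg0 _)
      let e : (Fin (N + 1) → ℤ) ≃ ℤ × (Fin N → ℤ) :=
        ⟨fun v => (v 0, fun i => v i.succ), fun p => Fin.cons p.1 p.2,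
          fun v => Fin.cons_self_tail v, fun p => by simp⟩
      refine (h.comp_injective e.injective).congr fun v => ?_
      simp only [Function.comp_apply, e, Equiv.coe_fn_mk]
      rw [Fin.prod_univ_succ]
      rfl

private lemma sum_prod_pi_aux {ι : Type*} [Fintype ι] {g : ℤ → ℝ} (hg0 : ∀ n, 0 ≤ g n)
    (hg : Summable g) : Summable (fun v : ι → ℤ => ∏ i, g (v i)) := by
  classical
  have e := Fintype.equivFin ι
  have h := sum_prod_fin_aux hg0 hg (Fintype.card ι)
  let e2 : (ι → ℤ) ≃ (Fin (Fintype.card ι) → ℤ) := Equiv.piCongrLeft' (fun _ => ℤ) e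
  refine (h.comp_injective e2.injective).congr fun v => ?_
  simp only [Function.comp_apply]
  refine Fintype.prod_equiv e.symm (fun i => g (e2 v i)) (fun i => g (v i)) fun i => ?_
  simp only [e2, Equiv.piCongrLeft'_apply]

private lemma sum_exp_zlattice_aux {E : Type*} [NormedAddCommGroup E] [NormedSpace ℝ E]
    [FiniteDimensional ℝ E] (L : Submodule ℤ E) [DiscreteTopology L] [IsZLattice ℝ L]
    {c : ℝ} (hc : 0 < c) : Summable (fun x : L => Real.exp (-c * ‖(x : E)‖)) := by
  have hfin : Module.Finite ℤ L := ZLattice.module_finite ℝ L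
  have hfree : Module.Free ℤ L := ZLattice.module_free ℝ L
  let b := Module.Free.chooseBasis ℤ L
  set ι := Module.Free.ChooseBasisIndex ℤ L with hι
  let B := Module.Basis.ofZLatticeBasis ℝ L b
  let T : E →L[ℝ] (ι → ℝ) := LinearMap.toContinuousLinearMap (B.equivFun.toLinearMap)
  set D : ℝ := (‖T‖ + 1) * (Fintype.card ι + 1) with hD
  have hDpos : 0 < D := by positivity
  have key : ∀ x : L, (∑ i, |((b.repr x i : ℤ) : ℝ)|) ≤ D * ‖(x : E)‖ := by
    intro x
    have h1 : ∀ i, |((b.repr x i : ℤ) : ℝ)| ≤ ‖T (x : E)‖ := by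
      intro i
      have h2 : ((b.repr x i : ℤ) : ℝ) = T (x : E) i := by
        simp [T, B, Module.Basis.equivFun_apply, Module.Basis.ofZLatticeBasis_repr_apply]
      rw [h2, ← Real.norm_eq_abs]
      exact norm_le_pi_norm _ i
    calc ∑ i, |((b.repr x i : ℤ) : ℝ)| ≤ ∑ _i : ι, ‖T (x : E)‖ :=
          Finset.sum_le_sum fun i _ => h1 i
      _ = (Fintype.card ι : ℝ) * ‖T (x : E)‖ := by
          rw [Finset.sum_const, Finset.card_univ, nsmul_eq_mul]
      _ ≤ ((Fintype.card ι : ℝ) + 1) * ((‖T‖ + 1) * ‖(x : E)‖) := by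
          refine mul_le_mul (by linarith) ?_ (norm_nonneg _) (by positivity)
          refine (T.le_opNorm _).trans ?_
          have := norm_nonneg (x : E)
          nlinarith [norm_nonneg T]
      _ = D * ‖(x : E)‖ := by rw [hD]; ring
  have hg : Summable (fun n : ℤ => Real.exp (-(c / D) * |(n : ℝ)|)) :=
    sum_exp_int_aux (by positivity)
  have hpi := sum_prod_pi_aux (ι := ι) (fun n => (Real.exp_pos _).le) hg
  have hinj : Function.Injective (fun x : L => (fun i => b.repr x i : ι → ℤ)) := by
    intro x y hxy
    refine b.repr.injective (Finsupp.ext fun i => ?_)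
    exact congrFun hxy i
  have hcomp := hpi.comp_injective hinj
  refine Summable.of_nonneg_of_le (fun x => (Real.exp_pos _).le) (fun x => ?_) hcomp
  have hkey := key x
  calc Real.exp (-c * ‖(x : E)‖)
      ≤ Real.exp (∑ i, -(c / D) * |((b.repr x i : ℤ) : ℝ)|) := by
        apply Real.exp_le_exp.mpr
        rw [show (∑ i, -(c / D) * |((b.repr x i : ℤ) : ℝ)|)
            = -((c / D) * ∑ i, |((b.repr x i : ℤ) : ℝ)|) from by
          rw [Finset.mul_sum]; simp [neg_mul]]
        rw [neg_mul, neg_le_neg_iff]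
        calc (c / D) * ∑ i, |((b.repr x i : ℤ) : ℝ)| ≤ (c / D) * (D * ‖(x : E)‖) :=
              mul_le_mul_of_nonneg_left hkey (by positivity)
          _ = c * ‖(x : E)‖ := by field_simp
    _ = ∏ i, Real.exp (-(c / D) * |((b.repr x i : ℤ) : ℝ)|) := Real.exp_sum _ _
    _ = _ := rfl

/-- For a totally real number field `F` and `δ > 0`, the sum over totally positive units
`η` of `∏_{j : |η^{(j)}| > 1} |η^{(j)}|^{-δ}` converges. -/
theorem stmt_1 (F : Type*) [Field F] [NumberField F]
    (htr : ∀ φ : F →+* ℂ, ∀ x : F, (φ x).im = 0) (δ : ℝ) (hδ : 0 < δ) :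
    Summable (fun η : {u : (NumberField.RingOfIntegers F)ˣ //
        ∀ j : F →+* ℝ, 0 < j (algebraMap (NumberField.RingOfIntegers F) F u)} =>
      ∏ j : F →+* ℝ,
        if 1 < |j (algebraMap (NumberField.RingOfIntegers F) F (η : (NumberField.RingOfIntegers F)ˣ))|
        then |j (algebraMap (NumberField.RingOfIntegers F) F (η : (NumberField.RingOfIntegers F)ˣ))| ^ (-δ)
        else 1) := by
  classical
  -- every complex embedding comes from a real embedding
  have hreal : ∀ φ : F →+* ℂ, ∃ j : F →+* ℝ, ∀ x, ((j x : ℂ)) = φ x := by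
    intro φ
    refine ⟨{ toFun := fun x => (φ x).re,
              map_one' := by simp,
              map_mul' := fun x y => by
                have hx := htr φ x; have hy := htr φ y
                simp [Complex.mul_re, hx, hy],
              map_zero' := by simp,
              map_add' := fun x y => by simp }, fun x => ?_⟩
    apply Complex.ext
    · simp
    · simp [htr φ x]
  choose jw hjw using fun w : InfinitePlace F => hreal (embedding w)
  have hw_eq : ∀ (w : InfinitePlace F) (x : F), w x = |jw w x| := by
    intro w x
    rw [← norm_embedding_eq, ← hjw w x, Complex.norm_real, Real.norm_eq_abs]
  have hjw_inj : Function.Injective jw := by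
    intro w w' h
    have hemb : embedding w = embedding w' := by
      ext x
      rw [← hjw w x, ← hjw w' x, h]
    rw [← mk_embedding w, ← mk_embedding w', hemb]
  -- the exponent sum
  set Mf : (𝓞 F)ˣ → ℝ :=
    fun u => ∑ j : F →+* ℝ, max (Real.log (j (algebraMap (𝓞 F) F ↑u))) 0 with hMf
  have hM0 : ∀ u, 0 ≤ Mf u := fun u => Finset.sum_nonneg fun j _ => le_max_right _ _
  -- norm bound for totally positive units
  have hbound : ∀ u : (𝓞 F)ˣ, (∀ j : F →+* ℝ, 0 < j (algebraMap (𝓞 F) F ↑u)) →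
      ‖logEmbedding F (Additive.ofMul u)‖ ≤ 4 * Mf u := by
    intro u hu
    set x : F := algebraMap (𝓞 F) F ↑u with hx
    have hwx : ∀ w : InfinitePlace F, w x = jw w x := fun w => by
      rw [hw_eq w x, abs_of_pos (hu (jw w))]
    have hwpos : ∀ w : InfinitePlace F, 0 < w x := fun w => by rw [hwx w]; exact hu _
    have hsum0 : ∑ w : InfinitePlace F, (mult w : ℝ) * Real.log (w x) = 0 := by
      have h1 : ∏ w : InfinitePlace F, (w x) ^ (mult w) = 1 := by
        rw [prod_eq_abs_norm]
        have hn : |Algebra.norm ℚ x| = 1 := NumberField.Units.norm (K := F) u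
        rw [hn, Rat.cast_one]
      have h2 := congrArg Real.log h1
      rw [Real.log_prod (fun w _ => pow_ne_zero _ (ne_of_gt (hwpos w))),
        Real.log_one] at h2
      simp_rw [Real.log_pow] at h2
      exact h2
    have habs : ∀ t : ℝ, |t| = 2 * max t 0 - t := by
      intro t
      rcases le_total 0 t with h | h
      · rw [abs_of_nonneg h, max_eq_left h]; ring
      · rw [abs_of_nonpos h, max_eq_right h]; ring
    have hsumabs : ∑ w : InfinitePlace F, (mult w : ℝ) * |Real.log (w x)|
        = 2 * ∑ w : InfinitePlace F, (mult w : ℝ) * max (Real.log (w x)) 0 := by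
      have hpt : ∀ w : InfinitePlace F, (mult w : ℝ) * |Real.log (w x)|
          = 2 * ((mult w : ℝ) * max (Real.log (w x)) 0) - (mult w : ℝ) * Real.log (w x) := by
        intro w; rw [habs]; ring
      rw [Finset.sum_congr rfl fun w _ => hpt w, Finset.sum_sub_distrib, hsum0, sub_zero,
        ← Finset.mul_sum]
    have hplace_le : ∑ w : InfinitePlace F, max (Real.log (w x)) 0 ≤ Mf u := by
      have h1 : ∑ w : InfinitePlace F, max (Real.log (w x)) 0
          = ∑ w : InfinitePlace F, max (Real.log ((jw w) x)) 0 :=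
        Finset.sum_congr rfl fun w _ => by rw [hwx w]
      have h2 : ∑ w : InfinitePlace F, max (Real.log ((jw w) x)) 0
          = ∑ j ∈ Finset.image jw Finset.univ, max (Real.log (j x)) 0 :=
        (Finset.sum_image (f := fun j : F →+* ℝ => max (Real.log (j x)) 0) (g := jw)
          (fun w _ w' _ h => hjw_inj h)).symm
      have h3 : ∑ j ∈ Finset.image jw Finset.univ, max (Real.log (j x)) 0
          ≤ ∑ j : F →+* ℝ, max (Real.log (j x)) 0 :=
        Finset.sum_le_sum_of_subset_of_nonneg (Finset.subset_univ _)
          (fun j _ _ => le_max_right _ _)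
      have h4 : Mf u = ∑ j : F →+* ℝ, max (Real.log (j x)) 0 := rfl
      rw [h1, h2, h4]
      exact h3
    have hmult : ∀ w : InfinitePlace F, (mult w : ℝ) ≤ 2 := by
      intro w
      rw [mult]
      split_ifs <;> norm_num
    have hmax_le : ∑ w : InfinitePlace F, (mult w : ℝ) * max (Real.log (w x)) 0
        ≤ 2 * Mf u := by
      calc ∑ w : InfinitePlace F, (mult w : ℝ) * max (Real.log (w x)) 0
          ≤ ∑ w : InfinitePlace F, 2 * max (Real.log (w x)) 0 :=
            Finset.sum_le_sum fun w _ =>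
              mul_le_mul_of_nonneg_right (hmult w) (le_max_right _ _)
        _ = 2 * ∑ w : InfinitePlace F, max (Real.log (w x)) 0 := by rw [← Finset.mul_sum]
        _ ≤ 2 * Mf u := by linarith [hplace_le]
    refine (pi_norm_le_iff_of_nonneg (by linarith [hM0 u])).mpr ?_
    intro w
    rw [logEmbedding_component, Real.norm_eq_abs, abs_mul, Nat.abs_cast]
    show (mult w.1 : ℝ) * |Real.log (w.1 x)| ≤ 4 * Mf u
    calc (mult w.1 : ℝ) * |Real.log (w.1 x)|
        ≤ ∑ w' : InfinitePlace F, (mult w' : ℝ) * |Real.log (w' x)| := by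
          refine Finset.single_le_sum (f := fun w' : InfinitePlace F =>
            (mult w' : ℝ) * |Real.log (w' x)|) (fun w' _ => by positivity)
            (Finset.mem_univ w.1)
      _ = 2 * ∑ w' : InfinitePlace F, (mult w' : ℝ) * max (Real.log (w' x)) 0 := hsumabs
      _ ≤ 2 * (2 * Mf u) := by linarith [hmax_le]
      _ = 4 * Mf u := by ring
  -- the map to the unit lattice
  have hmem : ∀ u : (𝓞 F)ˣ, logEmbedding F (Additive.ofMul u) ∈ unitLattice F :=
    fun u => Submodule.mem_map.mpr ⟨Additive.ofMul u, Submodule.mem_top, rfl⟩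
  set Φ : {u : (𝓞 F)ˣ // ∀ j : F →+* ℝ, 0 < j (algebraMap (𝓞 F) F ↑u)} → unitLattice F :=
    fun η => ⟨logEmbedding F (Additive.ofMul (η : (𝓞 F)ˣ)), hmem _⟩ with hΦ
  have hΦinj : Function.Injective Φ := by
    intro η₁ η₂ h
    have h' : logEmbedding F (Additive.ofMul (η₁ : (𝓞 F)ˣ)) =
        logEmbedding F (Additive.ofMul (η₂ : (𝓞 F)ˣ)) := congrArg Subtype.val h
    have h0 : logEmbedding F (Additive.ofMul ((η₁ : (𝓞 F)ˣ) * (η₂ : (𝓞 F)ˣ)⁻¹)) = 0 := by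
      have e1 : Additive.ofMul ((η₁ : (𝓞 F)ˣ) * (η₂ : (𝓞 F)ˣ)⁻¹)
          = Additive.ofMul (η₁ : (𝓞 F)ˣ) - Additive.ofMul (η₂ : (𝓞 F)ˣ) := rfl
      rw [e1, map_sub, h', sub_self]
    have htor := (mem_torsion F).mp (logEmbedding_eq_zero_iff.mp h0)
    obtain ⟨j, hj⟩ := hreal (embedding (Classical.arbitrary (InfinitePlace F)))
    set ζ : (𝓞 F)ˣ := (η₁ : (𝓞 F)ˣ) * (η₂ : (𝓞 F)ˣ)⁻¹ with hζ
    have hmul : j (algebraMap (𝓞 F) F ↑ζ) * j (algebraMap (𝓞 F) F ↑(η₂ : (𝓞 F)ˣ))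
        = j (algebraMap (𝓞 F) F ↑(η₁ : (𝓞 F)ˣ)) := by
      rw [← map_mul, ← map_mul, ← Units.val_mul, hζ, inv_mul_cancel_right]
    have hpos2 : 0 < j (algebraMap (𝓞 F) F ↑(η₂ : (𝓞 F)ˣ)) := η₂.2 j
    have hpos1 : 0 < j (algebraMap (𝓞 F) F ↑(η₁ : (𝓞 F)ˣ)) := η₁.2 j
    have hζpos : 0 < j (algebraMap (𝓞 F) F ↑ζ) := by nlinarith [hmul]
    have h1 : ‖(Complex.ofRealHom.comp j) (algebraMap (𝓞 F) F ↑ζ)‖ = 1 := by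
      have hval := htor (InfinitePlace.mk (Complex.ofRealHom.comp j))
      rw [InfinitePlace.apply] at hval
      exact hval
    have hζ1 : j (algebraMap (𝓞 F) F ↑ζ) = 1 := by
      have habs : |j (algebraMap (𝓞 F) F ↑ζ)| = 1 := by
        have : ‖((j (algebraMap (𝓞 F) F ↑ζ) : ℂ))‖ = 1 := h1
        rwa [Complex.norm_real, Real.norm_eq_abs] at this
      rwa [abs_of_pos hζpos] at habs
    have hstep : j (algebraMap (𝓞 F) F ↑(η₁ : (𝓞 F)ˣ))
        = j (algebraMap (𝓞 F) F ↑(η₂ : (𝓞 F)ˣ)) := by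
      rw [← hmul, hζ1, one_mul]
    have hOeq : ((η₁ : (𝓞 F)ˣ) : 𝓞 F) = ((η₂ : (𝓞 F)ˣ) : 𝓞 F) :=
      RingOfIntegers.coe_injective (j.injective hstep)
    exact Subtype.ext (Units.ext hOeq)
  -- summability over the unit lattice
  have hlat : Summable (fun x : unitLattice F =>
      Real.exp (-(δ / 4) * ‖(x : {w : InfinitePlace F // w ≠ w₀} → ℝ)‖)) :=
    sum_exp_zlattice_aux (unitLattice F) (by positivity)
  have hS := hlat.comp_injective hΦinj
  refine Summable.of_nonneg_of_le (fun η => Finset.prod_nonneg fun j _ => ?_)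
    (fun η => ?_) hS
  · split_ifs
    · exact Real.rpow_nonneg (abs_nonneg _) _
    · exact zero_le_one
  · have hP : (∏ j : F →+* ℝ,
        if 1 < |j (algebraMap (𝓞 F) F ↑(η : (𝓞 F)ˣ))|
        then |j (algebraMap (𝓞 F) F ↑(η : (𝓞 F)ˣ))| ^ (-δ)
        else 1) = Real.exp (-δ * Mf (η : (𝓞 F)ˣ)) := by
      have hMu : -δ * Mf (η : (𝓞 F)ˣ)
          = ∑ j : F →+* ℝ, -δ * max (Real.log (j (algebraMap (𝓞 F) F ↑(η : (𝓞 F)ˣ)))) 0 := by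
        show -δ * (∑ j : F →+* ℝ,
          max (Real.log (j (algebraMap (𝓞 F) F ↑(η : (𝓞 F)ˣ)))) 0) = _
        exact Finset.mul_sum _ _ _
      rw [hMu, Real.exp_sum]
      refine Finset.prod_congr rfl fun j _ => ?_
      have hpos := η.2 j
      rw [abs_of_pos hpos]
      by_cases h : 1 < j (algebraMap (𝓞 F) F ↑(η : (𝓞 F)ˣ))
      · rw [if_pos h, Real.rpow_def_of_pos hpos,
          max_eq_left (Real.log_nonneg h.le), mul_comm]
      · rw [if_neg h, max_eq_right (Real.log_nonpos hpos.le (not_lt.mp h)),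
          mul_zero, Real.exp_zero]
    rw [hP]
    have hcomp : ((fun x : unitLattice F =>
        Real.exp (-(δ / 4) * ‖(x : {w : InfinitePlace F // w ≠ w₀} → ℝ)‖)) ∘ Φ) η
        = Real.exp (-(δ / 4) * ‖logEmbedding F (Additive.ofMul (η : (𝓞 F)ˣ))‖) := rfl
    rw [hcomp]
    apply Real.exp_le_exp.mpr
    have hb := hbound (η : (𝓞 F)ˣ) η.2
    nlinarith [hM0 (η : (𝓞 F)ˣ), norm_nonneg (logEmbedding F (Additive.ofMul (η : (𝓞 F)ˣ)))]
end

section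
/- Let $x > 0$ with $x \neq 1$, let $k \ge 1$ be an integer and $c > 0$. Then $\frac{1}{2\pi i}\int_{(c)} x^{s} \frac{k!}{s^{k+1}} \, ds = (\log x)^k$ if $x > 1$ and $= 0$ if $0 < x < 1$. Consequently, for a polynomial $P = \sum_k a_k X^k$ with $P(0)=0$, setting $\widehat{P_M}(s) = \sum_k a_k k! (s \log M)^{-k}$, one has for every $M > 1$ not an integer and every positive integer $m$: $\frac{1}{2\pi i}\int_{(1)} \left(\frac{M}{m}\right)^{s} \widehat{P_M}(s) \frac{ds}{s} = P\!\left(\frac{\log(M/m)}{\log M}\right) \mathbb{1}_{m < M}$. -/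
open Complex MeasureTheory Set Filter Real
open scoped Topology FourierTransform

-- integrability of u^k e^{-su} on (0,∞)
lemma aux_integrable {s : ℂ} (hs : 0 < s.re) (k : ℕ) :
    IntegrableOn (fun u : ℝ => (u : ℂ) ^ k * Complex.exp (-s * u)) (Ioi 0) := by
  have h0 : IntegrableOn (fun u : ℝ => u ^ (k : ℝ) * Real.exp (-s.re * u ^ (1 : ℝ)))
      (Ioi 0) := integrableOn_rpow_mul_exp_neg_mul_rpow (lt_of_lt_of_le neg_one_lt_zero (Nat.cast_nonneg k)) zero_lt_one hs
  refine Integrable.mono' h0 ?_ ?_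
  · exact (Continuous.aestronglyMeasurable (by fun_prop)).restrict
  · filter_upwards [ae_restrict_mem measurableSet_Ioi] with u (hu : 0 < u)
    rw [norm_mul, Complex.norm_exp]
    simp only [Real.rpow_one, Real.rpow_natCast]
    gcongr
    · simp [abs_of_pos hu, hu.le]
    · exact le_of_eq (by simp [Complex.mul_re])

lemma aux_tendsto {s : ℂ} (hs : 0 < s.re) (k : ℕ) :
    Tendsto (fun u : ℝ => -((u : ℂ) ^ k * Complex.exp (-s * u)) / s) atTop (𝓝 0) := by
  rw [tendsto_zero_iff_norm_tendsto_zero]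
  have h : ∀ᶠ u : ℝ in atTop, ‖-((u : ℂ) ^ k * Complex.exp (-s * u)) / s‖
      = ‖s‖⁻¹ * (u ^ k * Real.exp (-(s.re * u))) := by
    filter_upwards [Ioi_mem_atTop (0 : ℝ)] with u (hu : 0 < u)
    rw [norm_div, norm_neg, norm_mul, Complex.norm_exp]
    have h1 : (-s * u).re = -(s.re * u) := by simp [Complex.mul_re]
    have h2 : ‖(u : ℂ) ^ k‖ = u ^ k := by
      rw [norm_pow]; simp [abs_of_pos hu]
    rw [h1, h2]; ring
  rw [tendsto_congr' h]
  have h3 := (tendsto_pow_mul_exp_neg_atTop_nhds_zero k).comp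
    (tendsto_id.const_mul_atTop hs : Tendsto (fun u : ℝ => s.re * u) atTop atTop)
  have h4 : Tendsto (fun u : ℝ => u ^ k * Real.exp (-(s.re * u))) atTop (𝓝 0) := by
    have h5 := h3.const_mul ((s.re⁻¹ : ℝ) ^ k)
    rw [mul_zero] at h5
    refine h5.congr fun u => ?_
    simp only [Function.comp_apply]
    have hcan : s.re⁻¹ ^ k * s.re ^ k = 1 := by
      rw [← mul_pow, inv_mul_cancel₀ hs.ne', one_pow]
    rw [mul_pow]
    linear_combination (u ^ k * Real.exp (-(s.re * u))) * hcan
  simpa using h4.const_mul (‖s‖⁻¹)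

lemma aux_deriv {s : ℂ} (hs : s ≠ 0) (k : ℕ) (u : ℝ) :
    HasDerivAt (fun u : ℝ => -((u : ℂ) ^ k * Complex.exp (-s * u)) / s)
      ((u : ℂ) ^ k * Complex.exp (-s * u)
        - ((k : ℂ) / s) * ((u : ℂ) ^ (k - 1) * Complex.exp (-s * u))) u := by
  have h1 : HasDerivAt (fun u : ℝ => (u : ℂ) ^ k) ((k : ℂ) * (u : ℂ) ^ (k - 1)) u :=
    (hasDerivAt_pow k (u : ℂ)).comp_ofReal
  have h2 : HasDerivAt (fun u : ℝ => Complex.exp (-s * u)) (-s * Complex.exp (-s * u)) u := by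
    have := (((hasDerivAt_id (u : ℂ)).const_mul (-s)).cexp).comp_ofReal
    simpa [Function.id_def, mul_comm] using this
  have := ((h1.mul h2).neg).div_const s
  convert this using 1
  · rfl
  · funext v
    simp only [Pi.neg_apply, Pi.mul_apply]
  field_simp
  ring

lemma key_integral {s : ℂ} (hs : 0 < s.re) : ∀ k : ℕ,
    ∫ u in Ioi (0:ℝ), (u : ℂ) ^ k * Complex.exp (-s * u) = (Nat.factorial k) / s ^ (k + 1) := by
  have hs0 : s ≠ 0 := fun h => by simp [h] at hs
  intro k
  induction k with
  | zero =>
    have := integral_Ioi_of_hasDerivAt_of_tendsto (f := fun u : ℝ =>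
        -((u : ℂ) ^ 0 * Complex.exp (-s * u)) / s)
        (f' := fun u : ℝ => (u : ℂ) ^ 0 * Complex.exp (-s * u)
          - (((0 : ℕ) : ℂ) / s) * ((u : ℂ) ^ (0 - 1) * Complex.exp (-s * u)))
        (a := 0)
        (by exact (Continuous.continuousWithinAt (by fun_prop)))
        (fun x _ => aux_deriv hs0 0 x)
        ((aux_integrable hs 0).sub ((aux_integrable hs (0-1)).const_mul _))
        (aux_tendsto hs 0)
    simp only [pow_zero, one_mul, Nat.zero_sub, Nat.cast_zero, zero_div, zero_mul, sub_zero,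
      Complex.ofReal_zero, mul_zero, Complex.exp_zero] at this ⊢
    rw [this]
    simp only [Nat.factorial, Nat.cast_one, pow_one]
    field_simp
    ring
  | succ n ih =>
    have h := integral_Ioi_of_hasDerivAt_of_tendsto (f := fun u : ℝ =>
        -((u : ℂ) ^ (n+1) * Complex.exp (-s * u)) / s)
        (f' := fun u : ℝ => (u : ℂ) ^ (n+1) * Complex.exp (-s * u)
          - (((n+1 : ℕ) : ℂ) / s) * ((u : ℂ) ^ n * Complex.exp (-s * u)))
        (a := 0)
        (by exact (Continuous.continuousWithinAt (by fun_prop)))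
        (fun x _ => by simpa using aux_deriv hs0 (n+1) x)
        ((aux_integrable hs (n+1)).sub (((aux_integrable hs n).const_mul _)))
        (aux_tendsto hs (n+1))
    rw [integral_sub (aux_integrable hs (n+1)) ((aux_integrable hs n).const_mul _),
      integral_const_mul, ih] at h
    simp only [Complex.ofReal_zero, ne_eq, mul_zero, Complex.exp_zero, mul_one, zero_pow,
      Nat.succ_ne_zero, not_false_eq_true, neg_zero, zero_div, sub_zero, zero_mul] at h
    have h' : ∫ u in Ioi (0:ℝ), (u : ℂ) ^ (n+1) * Complex.exp (-s * u)
        = ((n+1 : ℕ) : ℂ) / s * ((Nat.factorial n) / s ^ (n + 1)) := by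
      linear_combination h
    rw [h', div_mul_div_comm, ← pow_succ', Nat.factorial_succ]
    push_cast
    ring

lemma FT_integrable {c : ℝ} (hc : 0 < c) {k : ℕ} (hk : 1 ≤ k) :
    Integrable (fun ξ : ℝ => (Nat.factorial k : ℂ) /
      ((c : ℂ) + ((2 * Real.pi * ξ : ℝ) : ℂ) * Complex.I) ^ (k + 1)) := by
  set m : ℝ := min (c ^ 2) 1 with hm
  have hm0 : 0 < m := lt_min (by positivity) one_pos
  have hsne : ∀ ξ : ℝ, ((c : ℂ) + ((2 * Real.pi * ξ : ℝ) : ℂ) * Complex.I) ≠ 0 := by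
    intro ξ h
    have := congrArg Complex.re h
    simp at this
    exact hc.ne' this
  refine Integrable.mono' ((integrable_inv_one_add_sq.const_mul
    ((Nat.factorial k : ℝ) / (c ^ (k - 1) * m)))) ?_ ?_
  · apply Continuous.aestronglyMeasurable
    exact continuous_const.div (by fun_prop) (fun ξ => pow_ne_zero _ (hsne ξ))
  · refine Filter.Eventually.of_forall fun ξ => ?_
    set s : ℂ := (c : ℂ) + ((2 * Real.pi * ξ : ℝ) : ℂ) * Complex.I with hsdef
    have habs2 : (‖s‖) ^ 2 = c ^ 2 + (2 * Real.pi * ξ) ^ 2 := by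
      rw [Complex.sq_norm, Complex.normSq_apply]
      simp [hsdef]
      ring
    have hc_le : c ≤ ‖s‖ := by
      have := Complex.abs_re_le_norm s
      have hre : s.re = c := by simp [hsdef]
      rw [hre] at this
      exact (le_abs_self c).trans this
    have hsq : m * (1 + ξ ^ 2) ≤ (‖s‖) ^ 2 := by
      rw [habs2, mul_add, mul_one]
      have h1 : m ≤ c ^ 2 := min_le_left _ _
      have h2 : m * ξ ^ 2 ≤ (2 * Real.pi * ξ) ^ 2 := by
        have : m ≤ 1 := min_le_right _ _
        have h5 : (1:ℝ) ≤ (2 * Real.pi) ^ 2 := by nlinarith [Real.pi_gt_three]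
        have h4 : ξ ^ 2 ≤ (2 * Real.pi * ξ) ^ 2 := by
          rw [mul_pow]
          nlinarith [sq_nonneg ξ]
        nlinarith [sq_nonneg ξ]
      linarith
    have hpow : c ^ (k - 1) * (m * (1 + ξ ^ 2)) ≤ (‖s‖) ^ (k + 1) := by
      have hk1 : k + 1 = (k - 1) + 2 := by omega
      rw [hk1, pow_add]
      gcongr <;> first | exact hc.le | exact hsq
    have hnorm : ‖(Nat.factorial k : ℂ) / s ^ (k + 1)‖
        = (Nat.factorial k : ℝ) / (‖s‖) ^ (k + 1) := by
      rw [norm_div, norm_pow]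
      simp [Complex.norm_natCast]
    rw [hnorm]
    have hstep : (Nat.factorial k : ℝ) / (‖s‖) ^ (k + 1)
        ≤ (Nat.factorial k : ℝ) / (c ^ (k - 1) * (m * (1 + ξ ^ 2))) := by
      gcongr <;> first | positivity | exact hpow
    refine hstep.trans (le_of_eq ?_)
    rw [← mul_assoc, ← div_div, div_eq_mul_inv]

lemma part1 (x : ℝ) (hx : 0 < x) (hx1 : x ≠ 1) (k : ℕ) (hk : 1 ≤ k) (c : ℝ) (hc : 0 < c) :
    (1 / (2 * (Real.pi : ℂ))) * (∫ t : ℝ, (x : ℂ) ^ ((c : ℂ) + t * Complex.I) *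
        (Nat.factorial k) / ((c : ℂ) + t * Complex.I) ^ (k + 1)) =
      if 1 < x then ((Real.log x : ℂ)) ^ k else 0 := by
  classical
  set L : ℝ := Real.log x with hL
  set f : ℝ → ℂ := fun u => ((max u 0 : ℝ) : ℂ) ^ k * Complex.exp (-(c : ℂ) * u) with hf
  have hcre : (0 : ℝ) < ((c : ℂ) : ℂ).re := by simpa using hc
  have hfeq : f = Set.indicator (Ioi (0:ℝ))
      (fun u : ℝ => (u : ℂ) ^ k * Complex.exp (-(c : ℂ) * u)) := by
    funext u
    by_cases hu : 0 < u
    · rw [Set.indicator_of_mem (by exact hu)]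
      simp [hf, max_eq_left hu.le]
    · push_neg at hu
      rw [Set.indicator_of_notMem (by simpa using hu.not_gt)]
      simp [hf, max_eq_right hu, zero_pow (by omega : k ≠ 0)]
  have hfi : Integrable f := by
    rw [hfeq, integrable_indicator_iff measurableSet_Ioi]
    exact aux_integrable hcre k
  have hfc : Continuous f := by
    apply Continuous.mul
    · exact (Complex.continuous_ofReal.comp (continuous_id.max continuous_const)).pow k
    · exact Complex.continuous_exp.comp (continuous_const.mul Complex.continuous_ofReal)
  have hFT : 𝓕 f = fun ξ : ℝ => (Nat.factorial k : ℂ) /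
      ((c : ℂ) + ((2 * Real.pi * ξ : ℝ) : ℂ) * Complex.I) ^ (k + 1) := by
    funext ξ
    rw [Real.fourier_real_eq_integral_exp_smul]
    have heq : (fun v : ℝ => Complex.exp (((-2 * Real.pi * v * ξ : ℝ) : ℂ) * Complex.I) • f v)
        = Set.indicator (Ioi (0:ℝ)) (fun v : ℝ => (v : ℂ) ^ k *
            Complex.exp (-((c : ℂ) + ((2 * Real.pi * ξ : ℝ) : ℂ) * Complex.I) * v)) := by
      funext v
      rw [hfeq]
      by_cases hv : v ∈ Ioi (0:ℝ)
      · rw [Set.indicator_of_mem hv, Set.indicator_of_mem hv, smul_eq_mul, mul_left_comm,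
          ← Complex.exp_add]
        congr 2
        push_cast
        ring
      · rw [Set.indicator_of_notMem hv, Set.indicator_of_notMem hv, smul_zero]
    rw [heq, integral_indicator measurableSet_Ioi]
    have hre : (0:ℝ) < ((c : ℂ) + ((2 * Real.pi * ξ : ℝ) : ℂ) * Complex.I).re := by
      simpa using hc
    exact key_integral hre k
  have hFTi : Integrable (𝓕 f) := by
    rw [hFT]; exact FT_integrable hc hk
  have hinv : 𝓕⁻ (𝓕 f) L = f L := hfi.fourierInv_fourier_eq hFTi hfc.continuousAt
  rw [fourierInv_eq_fourier_neg,
    Real.fourier_real_eq_integral_exp_smul, hFT] at hinv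
  -- hinv : ∫ ξ, cexp(↑(-2π ξ (-L)) I) • (k!/(c+↑(2πξ)I)^(k+1)) = f L
  set h : ℝ → ℂ := fun t => Complex.exp (((t * L : ℝ) : ℂ) * Complex.I) *
      ((Nat.factorial k : ℂ) / ((c : ℂ) + (t : ℂ) * Complex.I) ^ (k + 1)) with hh
  have hsub : ∫ ξ : ℝ, h (2 * Real.pi * ξ) = f L := by
    rw [← hinv]
    congr 1
    funext ξ
    rw [hh, smul_eq_mul]
    push_cast
    ring_nf
  have hch : (∫ t : ℝ, h t) = ((2 * Real.pi : ℝ) : ℂ) * f L := by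
    have h2 := MeasureTheory.Measure.integral_comp_mul_left h (2 * Real.pi)
    rw [hsub, abs_of_pos (by positivity : (0:ℝ) < (2 * Real.pi)⁻¹)] at h2
    rw [h2, Complex.real_smul, ← mul_assoc, ← Complex.ofReal_mul,
      mul_inv_cancel₀ (by positivity : (2 * Real.pi) ≠ 0), Complex.ofReal_one, one_mul]
  have hxne : (x : ℂ) ≠ 0 := Complex.ofReal_ne_zero.2 hx.ne'
  have hlog : Complex.log (x : ℂ) = (L : ℂ) := (Complex.ofReal_log hx.le).symm
  have hint : (fun t : ℝ => (x : ℂ) ^ ((c : ℂ) + (t : ℂ) * Complex.I) *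
        (Nat.factorial k) / ((c : ℂ) + (t : ℂ) * Complex.I) ^ (k + 1))
      = fun t : ℝ => Complex.exp (((c * L : ℝ) : ℂ)) * h t := by
    funext t
    rw [hh]
    conv_rhs => rw [← mul_assoc, ← Complex.exp_add]
    rw [Complex.cpow_def_of_ne_zero hxne, hlog, mul_div_assoc]
    congr 2
    push_cast
    ring
  rw [hint, MeasureTheory.integral_const_mul, hch]
  have hpine : ((Real.pi : ℂ)) ≠ 0 := Complex.ofReal_ne_zero.2 Real.pi_ne_zero
  have hfactor : 1 / (2 * (Real.pi : ℂ)) * (Complex.exp (((c * L : ℝ) : ℂ)) *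
      (((2 * Real.pi : ℝ) : ℂ) * f L)) = Complex.exp (((c * L : ℝ) : ℂ)) * f L := by
    push_cast
    field_simp
  rw [hfactor]
  by_cases h1 : 1 < x
  · rw [if_pos h1]
    have hL0 : 0 < L := Real.log_pos h1
    have hzero : ((c * L : ℝ) : ℂ) + (-(c : ℂ) * (L : ℂ)) = 0 := by push_cast; ring
    show Complex.exp _ * (((max L 0 : ℝ) : ℂ) ^ k * Complex.exp (-(c : ℂ) * (L : ℂ))) = _
    rw [max_eq_left hL0.le, mul_left_comm, ← Complex.exp_add, hzero, Complex.exp_zero, mul_one]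
  · rw [if_neg h1]
    have hxlt : x < 1 := lt_of_le_of_ne (not_lt.1 h1) hx1
    have hL0 : L < 0 := Real.log_neg hx hxlt
    show Complex.exp _ * (((max L 0 : ℝ) : ℂ) ^ k * Complex.exp (-(c : ℂ) * (L : ℂ))) = _
    rw [max_eq_right hL0.le]
    simp [zero_pow (by omega : k ≠ 0)]

lemma part1' (x : ℝ) (hx : 0 < x) (hx1 : x ≠ 1) {k : ℕ} (hk : 1 ≤ k) :
    (1 / (2 * (Real.pi : ℂ))) * (∫ t : ℝ, (x : ℂ) ^ ((1 : ℂ) + (t : ℂ) * Complex.I) *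
        (Nat.factorial k) / ((1 : ℂ) + (t : ℂ) * Complex.I) ^ (k + 1)) =
      if 1 < x then ((Real.log x : ℂ)) ^ k else 0 := by
  have := part1 x hx hx1 k hk 1 one_pos
  simp only [Complex.ofReal_one] at this
  exact this

lemma part1_integrable (x : ℝ) (hx : 0 < x) {k : ℕ} (hk : 1 ≤ k) :
    Integrable (fun t : ℝ => (x : ℂ) ^ ((1 : ℂ) + (t : ℂ) * Complex.I) *
      (Nat.factorial k) / ((1 : ℂ) + (t : ℂ) * Complex.I) ^ (k + 1)) := by
  have hxne : (x : ℂ) ≠ 0 := Complex.ofReal_ne_zero.2 hx.ne'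
  have hsne : ∀ t : ℝ, ((1 : ℂ) + (t : ℂ) * Complex.I) ≠ 0 := by
    intro t h
    have := congrArg Complex.re h
    norm_num at this
  have habs : ∀ t : ℝ, (1 : ℝ) ≤ ‖(1 : ℂ) + (t : ℂ) * Complex.I‖ := by
    intro t
    have h1 := Complex.abs_re_le_norm ((1 : ℂ) + (t : ℂ) * Complex.I)
    have h2 : ((1 : ℂ) + (t : ℂ) * Complex.I).re = 1 := by simp
    rw [h2] at h1
    simpa using h1
  refine Integrable.mono' (integrable_inv_one_add_sq.const_mul
    (x * (Nat.factorial k : ℝ))) ?_ ?_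
  · apply Continuous.aestronglyMeasurable
    have heq : (fun t : ℝ => (x : ℂ) ^ ((1 : ℂ) + (t : ℂ) * Complex.I) *
        (Nat.factorial k) / ((1 : ℂ) + (t : ℂ) * Complex.I) ^ (k + 1))
        = fun t : ℝ => Complex.exp (Complex.log (x : ℂ) * ((1 : ℂ) + (t : ℂ) * Complex.I)) *
        (Nat.factorial k) / ((1 : ℂ) + (t : ℂ) * Complex.I) ^ (k + 1) := by
      funext t
      rw [Complex.cpow_def_of_ne_zero hxne]
    rw [heq]
    exact ((Complex.continuous_exp.comp (by fun_prop)).mul continuous_const).div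
      (by fun_prop) (fun t => pow_ne_zero _ (hsne t))
  · refine Filter.Eventually.of_forall fun t => ?_
    set s : ℂ := (1 : ℂ) + (t : ℂ) * Complex.I with hsdef
    have hnorm1 : ‖(x : ℂ) ^ s‖ = x := by
      rw [Complex.norm_cpow_eq_rpow_re_of_pos hx]
      simp [hsdef]
    have habs2 : (‖s‖) ^ 2 = 1 + t ^ 2 := by
      rw [Complex.sq_norm, Complex.normSq_apply]
      simp [hsdef]
      ring
    have hpow : 1 + t ^ 2 ≤ (‖s‖) ^ (k + 1) := by
      have hk1 : k + 1 = (k - 1) + 2 := by omega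
      rw [hk1, pow_add]
      calc 1 + t ^ 2 = 1 * (1 + t ^ 2) := (one_mul _).symm
        _ ≤ (‖s‖) ^ (k - 1) * (‖s‖) ^ 2 := by
            rw [habs2]
            gcongr
            exact one_le_pow₀ (habs t)
    rw [norm_div, norm_mul, hnorm1, norm_pow]
    have : ‖(Nat.factorial k : ℂ)‖ = (Nat.factorial k : ℝ) := by
      simp
    rw [this]
    calc x * (Nat.factorial k : ℝ) / ‖s‖ ^ (k + 1)
        ≤ x * (Nat.factorial k : ℝ) / (1 + t ^ 2) := by
          gcongr
      _ = x * (Nat.factorial k : ℝ) * (1 + t ^ 2)⁻¹ := by rw [div_eq_mul_inv]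

/-- Mellin inversion for the mollifier polynomial: the vertical-line integral
`(1/2πi) ∫_{(c)} x^s k!/s^{k+1} ds` equals `(log x)^k` for `x > 1` and `0` for `x < 1`;
consequently `(1/2πi) ∫_{(1)} (M/m)^s \widehat{P_M}(s) ds/s
  = P(log(M/m)/log M) 𝟙_{m < M}`. -/
theorem stmt_4 :
    (∀ x : ℝ, 0 < x → x ≠ 1 → ∀ k : ℕ, 1 ≤ k → ∀ c : ℝ, 0 < c →
      (1 / (2 * (Real.pi : ℂ))) * (∫ t : ℝ, (x : ℂ) ^ ((c : ℂ) + t * Complex.I) *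
          (Nat.factorial k) / ((c : ℂ) + t * Complex.I) ^ (k + 1)) =
        if 1 < x then ((Real.log x : ℂ)) ^ k else 0) ∧
    (∀ P : Polynomial ℝ, P.eval 0 = 0 → ∀ M : ℝ, 1 < M → (∀ n : ℕ, (n : ℝ) ≠ M) →
      ∀ m : ℕ, 0 < m →
      (1 / (2 * (Real.pi : ℂ))) * (∫ t : ℝ,
          ((M / m : ℝ) : ℂ) ^ ((1 : ℂ) + t * Complex.I) *
          (∑ k ∈ Finset.range (P.natDegree + 1), (P.coeff k : ℂ) * (Nat.factorial k) *
            ((((1 : ℂ) + t * Complex.I) * (Real.log M : ℂ)) ^ k)⁻¹) /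
          ((1 : ℂ) + t * Complex.I)) =
        if (m : ℝ) < M then ((P.eval (Real.log (M / m) / Real.log M) : ℝ) : ℂ) else 0) := by
  constructor
  · exact fun x hx hx1 k hk c hc => part1 x hx hx1 k hk c hc
  · intro P hP0 M hM hMnat m hm
    have hmne : (m : ℝ) ≠ 0 := Nat.cast_ne_zero.2 hm.ne'
    set X : ℝ := M / m with hXdef
    have hX0 : 0 < X := div_pos (lt_trans one_pos hM) (Nat.cast_pos.2 hm)
    have hXne1 : X ≠ 1 := fun h => hMnat m ((div_eq_one_iff_eq hmne).1 h).symm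
    have hLM : 0 < Real.log M := Real.log_pos hM
    set Lc : ℂ := (Real.log M : ℂ) with hLcdef
    have hLc : Lc ≠ 0 := Complex.ofReal_ne_zero.2 hLM.ne'
    have hc0 : P.coeff 0 = 0 := by rwa [Polynomial.coeff_zero_eq_eval_zero]
    set n : ℕ := P.natDegree + 1 with hn
    set g : ℕ → ℝ → ℂ := fun k t => ((P.coeff k : ℂ) / Lc ^ k) *
      ((X : ℂ) ^ ((1 : ℂ) + (t : ℂ) * Complex.I) * (Nat.factorial k) /
        ((1 : ℂ) + (t : ℂ) * Complex.I) ^ (k + 1)) with hg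
    have hsne : ∀ t : ℝ, ((1 : ℂ) + (t : ℂ) * Complex.I) ≠ 0 := by
      intro t h
      have := congrArg Complex.re h
      norm_num at this
    have hpt : (fun t : ℝ => ((X : ℝ) : ℂ) ^ ((1 : ℂ) + (t : ℂ) * Complex.I) *
        (∑ k ∈ Finset.range n, (P.coeff k : ℂ) * (Nat.factorial k) *
          ((((1 : ℂ) + (t : ℂ) * Complex.I) * Lc) ^ k)⁻¹) /
        ((1 : ℂ) + (t : ℂ) * Complex.I)) = fun t : ℝ => ∑ k ∈ Finset.range n, g k t := by
      funext t
      rw [Finset.mul_sum, Finset.sum_div]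
      refine Finset.sum_congr rfl fun k _ => ?_
      rw [hg]
      have hsk : ((1 : ℂ) + (t : ℂ) * Complex.I) ^ k ≠ 0 := pow_ne_zero _ (hsne t)
      have hLk : Lc ^ k ≠ 0 := pow_ne_zero _ hLc
      rw [mul_pow, mul_inv]
      have := hsne t
      field_simp
      ring
    have hInt : ∀ k ∈ Finset.range n, Integrable (g k) := by
      intro k _
      rcases Nat.eq_zero_or_pos k with rfl | hk
      · simp only [hg, hc0, Complex.ofReal_zero, zero_div, zero_mul]
        exact integrable_zero _ _ _
      · exact (part1_integrable X hX0 hk).const_mul _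
    rw [hpt, MeasureTheory.integral_finset_sum _ hInt, Finset.mul_sum]
    have hterm : ∀ k ∈ Finset.range n,
        1 / (2 * (Real.pi : ℂ)) * ∫ t : ℝ, g k t
          = ((P.coeff k : ℂ) / Lc ^ k) * (if 1 < X then ((Real.log X : ℂ)) ^ k else 0) := by
      intro k _
      rcases Nat.eq_zero_or_pos k with rfl | hk
      · simp only [hg, hc0, Complex.ofReal_zero, zero_div, zero_mul]
        simp
      · rw [hg, MeasureTheory.integral_const_mul, ← mul_assoc,
          mul_comm (1 / (2 * (Real.pi : ℂ))), mul_assoc, part1' X hX0 hXne1 hk]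
    rw [Finset.sum_congr rfl hterm]
    by_cases hmM : (m : ℝ) < M
    · rw [if_pos hmM]
      have hX1 : 1 < X := (one_lt_div (Nat.cast_pos.2 hm)).2 hmM
      have heval : P.eval (Real.log X / Real.log M)
          = ∑ k ∈ Finset.range n, P.coeff k * (Real.log X / Real.log M) ^ k := by
        rw [hn, Polynomial.eval_eq_sum_range]
      rw [heval]
      push_cast
      refine Finset.sum_congr rfl fun k _ => ?_
      rw [if_pos hX1, div_pow, div_mul_eq_mul_div, mul_div_assoc]
    · rw [if_neg hmM]
      refine Finset.sum_eq_zero fun k _ => ?_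
      have hX1 : ¬ (1 < X) := by
        intro h
        exact hmM ((one_lt_div (Nat.cast_pos.2 hm)).1 h)
      rw [if_neg hX1, mul_zero]
end

section
/- Consider the functional $\Phi(P) = \frac{(P(1) + P'(1))^2}{2\left(\frac{1}{3}\int_0^1 P''(t)^2 dt + P'(1)^2 + 2 P'(1) P(1) + P(1)^2\right)}$ on real polynomials $P$ with $P(0) = P'(0) = 0$ and $P(1) + P'(1) \neq 0$. Then $\sup_P \Phi(P) = \frac{7}{16}$, and the supremum is attained at $P(X) = X^2 - \frac{1}{6} X^3$. -/
open Polynomial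

/-- The functional `Φ(P)` controlling non-vanishing of derivatives of `L`-functions. -/
noncomputable def derivMollifValue (P : Polynomial ℝ) : ℝ :=
  (P.eval 1 + (Polynomial.derivative P).eval 1) ^ 2 /
    (2 * ((1 / 3) * (∫ t in (0 : ℝ)..1,
        ((Polynomial.derivative (Polynomial.derivative P)).eval t) ^ 2) +
      ((Polynomial.derivative P).eval 1) ^ 2 +
      2 * (Polynomial.derivative P).eval 1 * P.eval 1 + (P.eval 1) ^ 2))

lemma poly_int_aux (p F : Polynomial ℝ) (h : derivative F = p) :
    ∫ t in (0:ℝ)..1, p.eval t = F.eval 1 - F.eval 0 := by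
  refine intervalIntegral.integral_eq_sub_of_hasDerivAt
    (f := fun x => F.eval x) (f' := fun x => p.eval x) (fun x _ => ?_) ?_
  · simpa [h] using F.hasDerivAt x
  · exact p.continuous.intervalIntegrable _ _

lemma int_weight_sq_aux : ∫ t in (0:ℝ)..1, (2 - t)^2 = 7/3 := by
  have hd : derivative (C 4 * X - C 2 * X^2 + C (1/3) * X^3 : ℝ[X]) = (C 2 - X)^2 := by
    apply Polynomial.funext; intro x; simp [derivative_X_pow]; ring
  have h := poly_int_aux _ _ hd
  rw [intervalIntegral.integral_congr (g := fun t : ℝ => ((C 2 - X : ℝ[X])^2).eval t)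
    (fun t _ => by simp)]
  rw [h]; simp; norm_num

lemma key_ftc_aux (P : Polynomial ℝ) (h0 : P.eval 0 = 0)
    (h0' : (derivative P).eval 0 = 0) :
    ∫ t in (0:ℝ)..1, (2 - t) * (derivative (derivative P)).eval t
      = P.eval 1 + (derivative P).eval 1 := by
  have hd : derivative ((C 2 - X) * derivative P + P)
      = (C 2 - X) * derivative (derivative P) := by
    simp [derivative_mul]
  have h := poly_int_aux _ _ hd
  rw [intervalIntegral.integral_congr
    (g := fun t : ℝ => ((C 2 - X) * derivative (derivative P)).eval t)
    (fun t _ => by simp)]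
  rw [h]; simp [h0, h0']; ring

lemma main_ineq_aux (P : Polynomial ℝ) (h0 : P.eval 0 = 0)
    (h0' : (derivative P).eval 0 = 0) :
    (P.eval 1 + (derivative P).eval 1)^2
      ≤ (7/3) * ∫ t in (0:ℝ)..1, ((derivative (derivative P)).eval t)^2 := by
  set g := derivative (derivative P) with hg
  set N : ℝ := P.eval 1 + (derivative P).eval 1 with hN
  set c : ℝ := (3/7) * N with hc
  have h1 : ∫ t in (0:ℝ)..1, (2 - t) * g.eval t = N := key_ftc_aux P h0 h0'
  have h2 : ∫ t in (0:ℝ)..1, (2 - t)^2 = 7/3 := int_weight_sq_aux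
  have i1 : IntervalIntegrable (fun t : ℝ => (g.eval t)^2) MeasureTheory.volume 0 1 :=
    (g.continuous.pow 2).intervalIntegrable _ _
  have i2 : IntervalIntegrable (fun t : ℝ => (2*c) * ((2 - t) * g.eval t))
      MeasureTheory.volume 0 1 :=
    (continuous_const.mul ((continuous_const.sub continuous_id).mul
      g.continuous)).intervalIntegrable _ _
  have i3 : IntervalIntegrable (fun t : ℝ => c^2 * (2 - t)^2) MeasureTheory.volume 0 1 :=
    (continuous_const.mul ((continuous_const.sub continuous_id).pow 2)).intervalIntegrable _ _
  have h3 : (0:ℝ) ≤ ∫ t in (0:ℝ)..1, (g.eval t - c*(2 - t))^2 :=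
    intervalIntegral.integral_nonneg (by norm_num) (fun t _ => sq_nonneg _)
  have hexp : (∫ t in (0:ℝ)..1, (g.eval t - c*(2 - t))^2)
      = (∫ t in (0:ℝ)..1, (g.eval t)^2)
        - (∫ t in (0:ℝ)..1, (2*c) * ((2 - t) * g.eval t))
        + (∫ t in (0:ℝ)..1, c^2 * (2 - t)^2) := by
    rw [← intervalIntegral.integral_sub i1 i2, ← intervalIntegral.integral_add (i1.sub i2) i3]
    exact intervalIntegral.integral_congr (fun t _ => by ring)
  rw [intervalIntegral.integral_const_mul, intervalIntegral.integral_const_mul,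
    h1, h2] at hexp
  nlinarith [h3, hexp]

/-- The supremum of `Φ(P)` over real polynomials with `P(0) = P'(0) = 0` and
`P(1) + P'(1) ≠ 0` equals `7/16`, attained at `P = X^2 - X^3/6`. -/
theorem stmt_7 :
    (∀ P : Polynomial ℝ, P.eval 0 = 0 → (Polynomial.derivative P).eval 0 = 0 →
      P.eval 1 + (Polynomial.derivative P).eval 1 ≠ 0 → derivMollifValue P ≤ 7 / 16) ∧
    derivMollifValue (Polynomial.X ^ 2 - Polynomial.C (1 / 6) * Polynomial.X ^ 3) = 7 / 16 := by
  constructor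
  · intro P h0 h0' hne
    have hA : (0:ℝ) ≤ ∫ t in (0:ℝ)..1, ((derivative (derivative P)).eval t)^2 :=
      intervalIntegral.integral_nonneg (by norm_num) (fun t _ => sq_nonneg _)
    set A : ℝ := ∫ t in (0:ℝ)..1, ((derivative (derivative P)).eval t)^2 with hAdef
    set N : ℝ := P.eval 1 + (derivative P).eval 1 with hNdef
    have hkey : N^2 ≤ (7/3) * A := main_ineq_aux P h0 h0'
    have hNpos : 0 < N^2 := lt_of_le_of_ne (sq_nonneg N) (Ne.symm (pow_ne_zero 2 hne))
    have hD : 0 < 2 * ((1/3) * A + ((derivative P).eval 1)^2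
        + 2 * (derivative P).eval 1 * P.eval 1 + (P.eval 1)^2) := by
      have : ((derivative P).eval 1)^2 + 2 * (derivative P).eval 1 * P.eval 1
          + (P.eval 1)^2 = N^2 := by rw [hNdef]; ring
      nlinarith [hA, hNpos]
    rw [derivMollifValue, ← hAdef, ← hNdef, div_le_iff₀ hD]
    nlinarith [hkey, hA]
  · have hg : derivative (derivative ((X:ℝ[X])^2 - C (1/6) * X^3)) = C 2 - X := by
      apply Polynomial.funext; intro x; simp [derivative_X_pow]; ring
    rw [derivMollifValue, hg]
    have h2 : (∫ t in (0:ℝ)..1, ((C 2 - X : ℝ[X]).eval t)^2) = 7/3 := by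
      rw [intervalIntegral.integral_congr (g := fun t : ℝ => (2 - t)^2) (fun t _ => by simp)]
      exact int_weight_sq_aux
    rw [h2]
    norm_num
end

section
/- Let $f \in H^2(0,1)$ with $f(0) = f'(0) = 0$ minimize the Rayleigh-type quotient $\mathscr{Q}(f)/\mathscr{L}(f)^2$ where $\mathscr{Q}(f) = \int_0^1 f''(t)^2 dt$ and $\mathscr{L}(f) = f(1) + f'(1)$, subject to $\mathscr{L}(f) \neq 0$. Then $f$ is (up to a nonzero scalar multiple) the polynomial $X^2 - \frac{1}{6}X^3$; in particular any minimizer is a polynomial of degree at most 3. -/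
open MeasureTheory intervalIntegral

lemma hasDeriv_p1 (t : ℝ) : HasDerivAt (fun t : ℝ => t^2 - t^3/6) (2*t - t^2/2) t := by
  have h := ((hasDerivAt_pow 2 t).sub ((hasDerivAt_pow 3 t).div_const 6))
  exact h.congr_deriv (by push_cast; ring)

lemma hasDeriv_p2 (t : ℝ) : HasDerivAt (fun t : ℝ => 2*t - t^2/2) (2 - t) t := by
  have h := (((hasDerivAt_id t).const_mul 2).sub ((hasDerivAt_pow 2 t).div_const 2))
  exact h.congr_deriv (by push_cast; ring)

lemma int_sq : (∫ t in (0:ℝ)..1, (2 - t)^2) = 7/3 := by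
  have h : ∀ t ∈ Set.uIcc (0:ℝ) 1, HasDerivAt (fun t : ℝ => 4*t - 2*t^2 + t^3/3) ((2-t)^2) t := by
    intro t _
    have h := (((hasDerivAt_id t).const_mul 4).sub (((hasDerivAt_pow 2 t)).const_mul 2)).add
      ((hasDerivAt_pow 3 t).div_const 3)
    exact h.congr_deriv (by push_cast; ring)
  rw [intervalIntegral.integral_eq_sub_of_hasDerivAt h
    (((continuous_const.sub continuous_id).pow 2).intervalIntegrable 0 1)]
  norm_num


/-- A minimizer of the Rayleigh-type quotient `(∫_0^1 f''²) / (f(1) + f'(1))²` among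
twice-differentiable functions with square-integrable second derivative satisfying
`f(0) = f'(0) = 0` and `f(1) + f'(1) ≠ 0` is, up to a nonzero scalar, the polynomial
`X² - X³/6` on `[0,1]`. -/
theorem stmt_9 (f f' f'' : ℝ → ℝ)
    (hf : ∀ t : ℝ, HasDerivAt f (f' t) t) (hf' : ∀ t : ℝ, HasDerivAt f' (f'' t) t)
    (hL2 : IntervalIntegrable (fun t => (f'' t) ^ 2) MeasureTheory.volume 0 1)
    (h0 : f 0 = 0) (h0' : f' 0 = 0) (hL : f 1 + f' 1 ≠ 0)
    (hmin : ∀ g g' g'' : ℝ → ℝ, (∀ t : ℝ, HasDerivAt g (g' t) t) →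
      (∀ t : ℝ, HasDerivAt g' (g'' t) t) →
      IntervalIntegrable (fun t => (g'' t) ^ 2) MeasureTheory.volume 0 1 →
      g 0 = 0 → g' 0 = 0 → g 1 + g' 1 ≠ 0 →
      (∫ t in (0 : ℝ)..1, (f'' t) ^ 2) / (f 1 + f' 1) ^ 2 ≤
        (∫ t in (0 : ℝ)..1, (g'' t) ^ 2) / (g 1 + g' 1) ^ 2) :
    ∃ c : ℝ, c ≠ 0 ∧ ∀ t ∈ Set.Icc (0 : ℝ) 1, f t = c * (t ^ 2 - t ^ 3 / 6) := by
  set L := f 1 + f' 1 with hLdef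
  set Q := (∫ t in (0:ℝ)..1, (f'' t) ^ 2) with hQdef
  set lam := 3 * L / 7 with hlamdef
  -- measurability
  have hmeas : Measurable f'' := by
    have : f'' = deriv f' := funext fun t => ((hf' t).deriv).symm
    rw [this]; exact measurable_deriv f'
  -- integrability of the cross term (2-t) * f''
  have hcross : IntervalIntegrable (fun t => (2 - t) * f'' t) volume 0 1 := by
    have hg : IntervalIntegrable (fun t => (2-t)^2 + f'' t ^ 2) volume 0 1 :=
      (((continuous_const.sub continuous_id).pow 2).intervalIntegrable 0 1).add hL2
    apply IntervalIntegrable.mono_fun hg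
      (((measurable_const.sub measurable_id).mul hmeas).aestronglyMeasurable)
    filter_upwards with t
    simp only [Real.norm_eq_abs, id_eq, Pi.mul_apply, Pi.sub_apply]
    rw [abs_mul, abs_of_nonneg (show (0:ℝ) ≤ (2-t)^2 + f'' t ^ 2 by positivity)]
    nlinarith [sq_nonneg (|2 - t| - |f'' t|), sq_abs (2-t), sq_abs (f'' t), abs_nonneg (2-t), abs_nonneg (f'' t)]
  -- integrability of f'' itself
  have hint : IntervalIntegrable f'' volume 0 1 := by
    have hg : IntervalIntegrable (fun t => 1 + f'' t ^ 2) volume 0 1 :=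
      (_root_.intervalIntegrable_const).add hL2
    apply IntervalIntegrable.mono_fun hg hmeas.aestronglyMeasurable
    filter_upwards with t
    simp only [Real.norm_eq_abs]
    rw [abs_of_nonneg (show (0:ℝ) ≤ 1 + f'' t ^ 2 by positivity)]
    nlinarith [sq_nonneg (|f'' t| - 1), sq_abs (f'' t), abs_nonneg (f'' t)]
  -- integration by parts : L = ∫ (2-t) f''
  have hparts : (∫ t in (0:ℝ)..1, (2 - t) * f'' t) = L := by
    have hd : ∀ t ∈ Set.uIcc (0:ℝ) 1, HasDerivAt (fun t => (2 - t) * f' t + f t)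
        ((2 - t) * f'' t) t := by
      intro t _
      have h := (((hasDerivAt_const t (2:ℝ)).sub (hasDerivAt_id t)).mul (hf' t)).add (hf t)
      exact h.congr_deriv (by simp only [Pi.sub_apply, id_eq]; ring)
    rw [intervalIntegral.integral_eq_sub_of_hasDerivAt hd hcross]
    rw [h0, h0']; ring
  -- the competitor polynomial
  have hcomp := hmin (fun t => t^2 - t^3/6) (fun t => 2*t - t^2/2) (fun t => 2 - t)
    hasDeriv_p1 hasDeriv_p2
    (by exact ((continuous_const.sub continuous_id).pow 2).intervalIntegrable 0 1)
    (by norm_num) (by norm_num) (by norm_num)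
  have hLsq : (0:ℝ) < L ^ 2 := lt_of_le_of_ne (sq_nonneg L) (Ne.symm (pow_ne_zero 2 hL))
  have hQle : Q ≤ 3/7 * L^2 := by
    rw [int_sq] at hcomp
    rw [div_le_div_iff₀ hLsq (by norm_num)] at hcomp
    nlinarith [hcomp]
  -- the squared residual
  have hsqint : IntervalIntegrable (fun t => (f'' t - lam * (2 - t))^2) volume 0 1 := by
    have hg : IntervalIntegrable (fun t => 2 * f'' t ^ 2 + 2 * (lam * (2-t))^2) volume 0 1 :=
      (hL2.const_mul 2).add ((((continuous_const.mul (continuous_const.sub continuous_id)).pow 2).intervalIntegrable 0 1).const_mul 2)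
    have hm : Measurable (fun t => (f'' t - lam * (2 - t))^2) :=
      (hmeas.sub (measurable_const.mul (measurable_const.sub measurable_id))).pow_const 2
    apply IntervalIntegrable.mono_fun hg hm.aestronglyMeasurable
    filter_upwards with t
    simp only [Real.norm_eq_abs]
    rw [abs_of_nonneg (show (0:ℝ) ≤ (f'' t - lam * (2-t))^2 by positivity),
      abs_of_nonneg (show (0:ℝ) ≤ 2 * f'' t ^ 2 + 2 * (lam * (2-t))^2 by positivity)]
    nlinarith [sq_nonneg (f'' t + lam * (2 - t))]
  have hexpand : (∫ t in (0:ℝ)..1, (f'' t - lam * (2 - t))^2) = Q - 3/7 * L^2 := by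
    have heq : (fun t => (f'' t - lam * (2 - t))^2)
        = fun t => f'' t ^ 2 - (2*lam) * ((2 - t) * f'' t) + lam^2 * (2-t)^2 := by
      funext t; ring
    have hcm : IntervalIntegrable (fun t => (2*lam) * ((2 - t) * f'' t)) volume 0 1 :=
      hcross.const_mul _
    have hc2 : IntervalIntegrable (fun t => lam^2 * (2 - t)^2) volume 0 1 := by
      apply Continuous.intervalIntegrable; fun_prop
    rw [heq, intervalIntegral.integral_add (hL2.sub hcm) hc2,
      intervalIntegral.integral_sub hL2 hcm,
      intervalIntegral.integral_const_mul, intervalIntegral.integral_const_mul,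
      hparts, int_sq, hlamdef]
    ring
  have hge : 0 ≤ (∫ t in (0:ℝ)..1, (f'' t - lam * (2 - t))^2) :=
    intervalIntegral.integral_nonneg (by norm_num) (fun t _ => sq_nonneg _)
  have hzero : (∫ t in (0:ℝ)..1, (f'' t - lam * (2 - t))^2) = 0 := by
    rw [hexpand]; linarith
  -- a.e. vanishing
  have hae : ∀ᵐ t ∂volume, t ∈ Set.Ioc (0:ℝ) 1 → f'' t = lam * (2 - t) := by
    rw [intervalIntegral.integral_of_le (by norm_num : (0:ℝ) ≤ 1)] at hzero
    have hnn : (0 : ℝ → ℝ) ≤ fun t => (f'' t - lam * (2 - t))^2 :=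
      fun t => sq_nonneg _
    have hInt : Integrable (fun t => (f'' t - lam * (2 - t))^2)
        (volume.restrict (Set.Ioc (0:ℝ) 1)) := hsqint.1
    have h := (MeasureTheory.integral_eq_zero_iff_of_nonneg hnn hInt).mp hzero
    rw [Filter.EventuallyEq, ae_restrict_iff' measurableSet_Ioc] at h
    filter_upwards [h] with t ht htm
    have := ht htm
    simp only [Pi.zero_apply] at this
    have h2 := pow_eq_zero_iff (n := 2) (by norm_num) |>.mp this
    linarith
  -- f' on [0,1]
  have hf'eq : ∀ t ∈ Set.Icc (0:ℝ) 1, f' t = lam * (2*t - t^2/2) := by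
    intro t ht
    have hsub : IntervalIntegrable f'' volume 0 t :=
      hint.mono_set (by
        rw [Set.uIcc_of_le ht.1, Set.uIcc_of_le (by norm_num : (0:ℝ) ≤ 1)]
        exact Set.Icc_subset_Icc le_rfl ht.2)
    have hftc : (∫ s in (0:ℝ)..t, f'' s) = f' t - f' 0 :=
      intervalIntegral.integral_eq_sub_of_hasDerivAt (fun s _ => hf' s) hsub
    have hcong : (∫ s in (0:ℝ)..t, f'' s) = ∫ s in (0:ℝ)..t, lam * (2 - s) := by
      apply intervalIntegral.integral_congr_ae
      filter_upwards [hae] with s hs hsm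
      rw [Set.uIoc_of_le ht.1] at hsm
      exact hs ⟨hsm.1, hsm.2.trans ht.2⟩
    have hval : (∫ s in (0:ℝ)..t, lam * (2 - s)) = lam * (2*t - t^2/2) := by
      have hd : ∀ s ∈ Set.uIcc (0:ℝ) t, HasDerivAt (fun s : ℝ => lam * (2*s - s^2/2))
          (lam * (2 - s)) s := fun s _ => (hasDeriv_p2 s).const_mul lam
      rw [intervalIntegral.integral_eq_sub_of_hasDerivAt hd
        ((continuous_const.mul (continuous_const.sub continuous_id)).intervalIntegrable 0 t)]
      ring
    rw [hcong, hval] at hftc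
    linarith [hftc]
  refine ⟨lam, by simp [hlamdef]; exact hL, fun t ht => ?_⟩
  have hf'cont : Continuous f' := by
    rw [continuous_iff_continuousAt]; exact fun s => (hf' s).continuousAt
  have hftc : (∫ s in (0:ℝ)..t, f' s) = f t - f 0 :=
    intervalIntegral.integral_eq_sub_of_hasDerivAt (fun s _ => hf s)
      (hf'cont.intervalIntegrable 0 t)
  have hcong : (∫ s in (0:ℝ)..t, f' s) = ∫ s in (0:ℝ)..t, lam * (2*s - s^2/2) := by
    apply intervalIntegral.integral_congr
    intro s hs
    rw [Set.uIcc_of_le ht.1] at hs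
    exact hf'eq s ⟨hs.1, hs.2.trans ht.2⟩
  have hval : (∫ s in (0:ℝ)..t, lam * (2*s - s^2/2)) = lam * (t^2 - t^3/6) := by
    have hd : ∀ s ∈ Set.uIcc (0:ℝ) t, HasDerivAt (fun s : ℝ => lam * (s^2 - s^3/6))
        (lam * (2*s - s^2/2)) s := fun s _ => (hasDeriv_p1 s).const_mul lam
    rw [intervalIntegral.integral_eq_sub_of_hasDerivAt hd
      ((continuous_const.mul ((continuous_const.mul continuous_id).sub
        ((continuous_pow 2).div_const 2))).intervalIntegrable 0 t)]
    ring
  rw [hcong, hval, h0] at hftc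
  linarith [hftc]
end

section
/- Let $F$ be a number field, $\mathfrak{q}$ a nonzero ideal of $\mathcal{O}_F$, $\mathfrak{m}, \mathfrak{n}$ nonzero integral ideals, and $0 < \delta < 1/2$. Then $\sum_{\mathfrak{c} \subset \mathfrak{q}, \mathfrak{c} \neq 0} \frac{N(\gcd(\mathfrak{m},\mathfrak{n},\mathfrak{c}))^{1/2}}{N(\mathfrak{c})^{3/2 - \delta}} \ll_{\delta} \frac{N(\gcd(\mathfrak{m},\mathfrak{n},\mathfrak{q}))^{1/2}}{N(\mathfrak{q})^{3/2-\delta}} \cdot N(\gcd(\mathfrak{m},\mathfrak{n}))^{\delta}$, where the sum is over nonzero ideals $\mathfrak{c}$ contained in $\mathfrak{q}$ and the implied constant depends only on $\delta$ and $F$. -/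
open Finset UniqueFactorizationMonoid

namespace Stmt12Aux

lemma inv_one_sub_le_of_le_half {x : ℝ} (h0 : 0 ≤ x) (h2 : x ≤ 1/2) : (1 - x)⁻¹ ≤ 1 + 2*x := by
  have h : (0:ℝ) < 1 - x := by linarith
  rw [inv_eq_one_div, div_le_iff₀ h]; nlinarith

lemma inv_one_sub_le_four {x : ℝ} (h0 : 0 ≤ x) (h2 : x ≤ 3/4) : (1 - x)⁻¹ ≤ 4 := by
  have h : (0:ℝ) < 1 - x := by linarith
  rw [inv_eq_one_div, div_le_iff₀ h]; nlinarith

section Ded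

variable {S : Type*} [CommRing S] [IsDedekindDomain S] [Module.Free ℤ S] [Module.Finite ℤ S]

lemma eq_prod_count [DecidableEq (Ideal S)] (P : Finset (Ideal S)) {b : Ideal S} (hb : b ≠ ⊥)
    (hsub : (normalizedFactors b).toFinset ⊆ P) :
    b = ∏ p ∈ P, p ^ (normalizedFactors b).count p := by
  conv_lhs => rw [← associated_iff_eq.mp (prod_normalizedFactors hb)]
  exact Finset.prod_multiset_count_of_subset _ P hsub

lemma norm_rpow_eq_prod [DecidableEq (Ideal S)] {σ : ℝ} (P : Finset (Ideal S)) {b : Ideal S}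
    (hb : b ≠ ⊥) (hsub : (normalizedFactors b).toFinset ⊆ P) :
    (Ideal.absNorm b : ℝ) ^ (-σ) =
      ∏ p ∈ P, ((Ideal.absNorm p : ℝ) ^ (-σ)) ^ ((normalizedFactors b).count p) := by
  have hN : (Ideal.absNorm b : ℝ) =
      ∏ p ∈ P, (Ideal.absNorm p : ℝ) ^ ((normalizedFactors b).count p) := by
    conv_lhs => rw [eq_prod_count P hb hsub]
    rw [map_prod]
    push_cast [map_pow]
    rfl
  rw [hN, ← Real.finset_prod_rpow _ _ (fun p _ => by positivity) (-σ)]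
  refine Finset.prod_congr rfl fun p hp => ?_
  rw [← Real.rpow_natCast ((Ideal.absNorm p : ℝ)) _, ← Real.rpow_mul (by positivity),
    mul_comm ((((normalizedFactors b).count p : ℕ) : ℝ)) (-σ), Real.rpow_mul (by positivity),
    Real.rpow_natCast]

lemma two_le_absNorm {p : Ideal S} (hp : Prime p) : 2 ≤ Ideal.absNorm p := by
  have h0 : Ideal.absNorm p ≠ 0 := by
    rw [Ne, Ideal.absNorm_eq_zero_iff]
    simpa [Ideal.zero_eq_bot] using hp.ne_zero
  have h1 : Ideal.absNorm p ≠ 1 := by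
    rw [Ne, Ideal.absNorm_eq_one_iff]
    intro h
    exact hp.not_unit (by simp [Ideal.isUnit_iff, h])
  omega

lemma geom_sum_le_inv {x : ℝ} (h0 : 0 ≤ x) (h1 : x < 1) (n : ℕ) :
    ∑ j ∈ Finset.range n, x ^ j ≤ (1 - x)⁻¹ := by
  have hne : x ≠ 1 := ne_of_lt h1
  have hpos : (0:ℝ) < 1 - x := by linarith
  rw [geom_sum_eq hne, div_le_iff_of_neg (by linarith : x - 1 < 0)]
  have h4 : (1-x)⁻¹ * (x-1) = -1 := by field_simp; ring
  have := pow_nonneg h0 n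
  linarith

lemma sum_rpow_le_prod [DecidableEq (Ideal S)] {σ : ℝ} (hσ : 0 < σ) (B : Finset (Ideal S))
    (hB : ∀ b ∈ B, b ≠ ⊥) :
    ∑ b ∈ B, (Ideal.absNorm b : ℝ) ^ (-σ) ≤
      ∏ p ∈ B.biUnion (fun b => (normalizedFactors b).toFinset),
        (1 - (Ideal.absNorm p : ℝ) ^ (-σ))⁻¹ := by
  classical
  set P := B.biUnion (fun b => (normalizedFactors b).toFinset) with hP
  have hPprime : ∀ p ∈ P, Prime p := by
    intro p hp
    rw [hP, Finset.mem_biUnion] at hp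
    obtain ⟨b, hb, hpb⟩ := hp
    exact prime_of_normalized_factor _ (Multiset.mem_toFinset.mp hpb)
  set E := B.sup (fun b => Multiset.card (normalizedFactors b)) with hE
  have hx0 : ∀ p : Ideal S, 0 ≤ (Ideal.absNorm p : ℝ) ^ (-σ) :=
    fun p => Real.rpow_nonneg (Nat.cast_nonneg _) _
  have hx1 : ∀ p ∈ P, (Ideal.absNorm p : ℝ) ^ (-σ) < 1 := by
    intro p hp
    refine Real.rpow_lt_one_of_one_lt_of_neg ?_ (by linarith)
    exact_mod_cast lt_of_lt_of_le one_lt_two (by exact_mod_cast two_le_absNorm (hPprime p hp))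
  have hsub : ∀ b ∈ B, (normalizedFactors b).toFinset ⊆ P := by
    intro b hb
    rw [hP]
    exact Finset.subset_biUnion_of_mem (fun b => (normalizedFactors b).toFinset) hb
  calc ∑ b ∈ B, (Ideal.absNorm b : ℝ) ^ (-σ)
      = ∑ b ∈ B, ∏ p ∈ P.attach,
          ((Ideal.absNorm p.1 : ℝ) ^ (-σ)) ^ ((normalizedFactors b).count p.1) := by
        refine Finset.sum_congr rfl fun b hb => ?_
        rw [norm_rpow_eq_prod P (hB b hb) (hsub b hb), ← Finset.prod_attach]
    _ ≤ ∑ g ∈ P.pi (fun _ => Finset.range (E+1)), ∏ p ∈ P.attach,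
          ((Ideal.absNorm p.1 : ℝ) ^ (-σ)) ^ (g p.1 p.2) := by
        have hinj : ∀ x ∈ B, ∀ y ∈ B,
            (fun p (_ : p ∈ P) => (normalizedFactors x).count p)
              = (fun p (_ : p ∈ P) => (normalizedFactors y).count p) → x = y := by
          intro x hx y hy hxy
          rw [eq_prod_count P (hB x hx) (hsub x hx), eq_prod_count P (hB y hy) (hsub y hy)]
          refine Finset.prod_congr rfl fun p hp => ?_
          have hcount : (normalizedFactors x).count p = (normalizedFactors y).count p := by
            have := congrFun (congrFun hxy p) hp
            simpa using this
          rw [hcount]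
        have himg : B.image (fun b => (fun p (_ : p ∈ P) => (normalizedFactors b).count p))
            ⊆ P.pi (fun _ => Finset.range (E+1)) := by
          intro f hf
          rw [Finset.mem_image] at hf
          obtain ⟨b, hb, rfl⟩ := hf
          rw [Finset.mem_pi]
          intro p hp
          refine Finset.mem_range.mpr (Nat.lt_succ_of_le ((Multiset.count_le_card _ _).trans ?_))
          rw [hE]
          exact Finset.le_sup (f := fun b => Multiset.card (normalizedFactors b)) hb
        refine le_trans (le_of_eq ?_) (Finset.sum_le_sum_of_subset_of_nonneg himg ?_)
        · exact (Finset.sum_image (g := fun b => (fun p (_ : p ∈ P) => (normalizedFactors b).count p))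
            (f := fun f : (∀ a ∈ P, ℕ) => ∏ p ∈ P.attach,
              ((Ideal.absNorm p.1 : ℝ) ^ (-σ)) ^ (f p.1 p.2)) hinj).symm
        · intro f _ _
          exact Finset.prod_nonneg fun p _ => pow_nonneg (hx0 p.1) _
    _ = ∏ p ∈ P, ∑ j ∈ Finset.range (E+1), ((Ideal.absNorm p : ℝ) ^ (-σ)) ^ j := by
        rw [Finset.prod_sum]
    _ ≤ ∏ p ∈ P, (1 - (Ideal.absNorm p : ℝ) ^ (-σ))⁻¹ := by
        refine Finset.prod_le_prod (fun p _ => Finset.sum_nonneg fun j _ => pow_nonneg (hx0 p) j)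
          (fun p hp => geom_sum_le_inv (hx0 p) (hx1 p hp) _)

lemma card_norm_bound [DecidableEq (Ideal S)] [CharZero S] {η : ℝ} (hη : 0 < η)
    (P : Finset (Ideal S)) (hPprime : ∀ p ∈ P, Prime p) {k : ℕ} (hk : 2 ≤ k) :
    ((P.filter (fun p => Ideal.absNorm p = k)).card : ℝ) ≤
      ((Fintype.card (Module.Free.ChooseBasisIndex ℤ S) : ℝ) / (η * Real.log 2)) * (k:ℝ) ^ η := by
  set n₀ := Fintype.card (Module.Free.ChooseBasisIndex ℤ S) with hn₀
  set J : Ideal S := Ideal.span {(k : S)} with hJ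
  have hk0 : (k : S) ≠ 0 := Nat.cast_ne_zero.mpr (by omega)
  have hJ0 : J ≠ 0 := by
    rw [hJ, Ne, Ideal.zero_eq_bot, Ideal.span_singleton_eq_bot]
    exact hk0
  have hNJ : Ideal.absNorm J = k ^ n₀ := by
    rw [hJ, Ideal.absNorm_span_singleton]
    have : ((k : ℕ) : S) = algebraMap ℤ S (k : ℤ) := by push_cast; rfl
    rw [this, Algebra.norm_algebraMap_of_basis (Module.Free.chooseBasis ℤ S)]
    simp [Int.natAbs_pow]
    rfl
  have hsubset : P.filter (fun p => Ideal.absNorm p = k) ⊆ (normalizedFactors J).toFinset := by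
    intro p hp
    rw [Finset.mem_filter] at hp
    obtain ⟨hpP, hpk⟩ := hp
    refine Multiset.mem_toFinset.mpr ((mem_normalizedFactors_iff hJ0).mpr
      ⟨hPprime p hpP, ?_⟩)
    refine Ideal.dvd_span_singleton.mpr ?_
    have := Ideal.absNorm_mem p
    rwa [hpk] at this
  set c := Multiset.card (normalizedFactors J) with hc
  have hcard : (P.filter (fun p => Ideal.absNorm p = k)).card ≤ c := by
    refine (Finset.card_le_card hsubset).trans ?_
    exact Multiset.toFinset_card_le _
  have hpow : 2 ^ c ≤ k ^ n₀ := by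
    have h1 : Ideal.absNorm J = ((normalizedFactors J).map Ideal.absNorm).prod := by
      conv_lhs => rw [← associated_iff_eq.mp (prod_normalizedFactors hJ0)]
      rw [map_multiset_prod]
    have h2 : (2:ℕ) ^ c ≤ ((normalizedFactors J).map Ideal.absNorm).prod := by
      rw [hc, ← Multiset.card_map Ideal.absNorm]
      refine Multiset.pow_card_le_prod ?_
      intro x hx
      rw [Multiset.mem_map] at hx
      obtain ⟨p, hp, rfl⟩ := hx
      exact two_le_absNorm (prime_of_normalized_factor p hp)
    rw [← hNJ, h1]
    exact h2
  -- now transfer to ℝ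
  have hlog2 : (0:ℝ) < Real.log 2 := Real.log_pos one_lt_two
  have hk1 : (1:ℝ) ≤ (k:ℝ) := by exact_mod_cast Nat.one_le_iff_ne_zero.mpr (by omega)
  have hkpos : (0:ℝ) < (k:ℝ) := by linarith
  have hrpow : (0:ℝ) < (k:ℝ) ^ η := Real.rpow_pos_of_pos hkpos η
  have hclog : (c:ℝ) * Real.log 2 ≤ (n₀:ℝ) * Real.log k := by
    have := Real.log_le_log (by positivity : (0:ℝ) < 2 ^ c)
      (by exact_mod_cast hpow : ((2:ℝ)) ^ c ≤ (k:ℝ) ^ n₀)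
    rwa [Real.log_pow, Real.log_pow] at this
  have hlogk : Real.log k ≤ (k:ℝ) ^ η / η := by
    have h1 : Real.log ((k:ℝ) ^ η) ≤ (k:ℝ) ^ η - 1 := Real.log_le_sub_one_of_pos hrpow
    rw [Real.log_rpow hkpos] at h1
    rw [le_div_iff₀ hη]
    nlinarith [h1]
  have hcle : (c:ℝ) ≤ ((n₀:ℝ) / (η * Real.log 2)) * (k:ℝ) ^ η := by
    rw [div_mul_eq_mul_div, le_div_iff₀ (by positivity)]
    calc (c:ℝ) * (η * Real.log 2) = ((c:ℝ) * Real.log 2) * η := by ring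
      _ ≤ ((n₀:ℝ) * Real.log k) * η := by
          exact mul_le_mul_of_nonneg_right hclog hη.le
      _ ≤ (n₀:ℝ) * ((k:ℝ) ^ η / η) * η := by
          have : (0:ℝ) ≤ (n₀:ℝ) := by positivity
          exact mul_le_mul_of_nonneg_right (mul_le_mul_of_nonneg_left hlogk this) hη.le
      _ = (n₀:ℝ) * (k:ℝ) ^ η := by field_simp
  exact le_trans (by exact_mod_cast hcard) hcle

lemma exists_primeSum_bound [CharZero S] {σ : ℝ} (hσ : 1 < σ) :
    ∃ S0 : ℝ, 0 ≤ S0 ∧ ∀ P : Finset (Ideal S), (∀ p ∈ P, Prime p) →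
      ∑ p ∈ P, (Ideal.absNorm p : ℝ) ^ (-σ) ≤ S0 := by
  classical
  set η : ℝ := (σ - 1)/2 with hηdef
  have hη : 0 < η := by rw [hηdef]; linarith
  set c₁ : ℝ := (Fintype.card (Module.Free.ChooseBasisIndex ℤ S) : ℝ) / (η * Real.log 2) with hc₁
  have hc₁0 : 0 ≤ c₁ := by
    rw [hc₁]
    have := Real.log_pos (by norm_num : (1:ℝ) < 2)
    positivity
  have hsummable : Summable (fun k : ℕ => (k:ℝ) ^ (-(σ - η))) := by
    refine Real.summable_nat_rpow.mpr ?_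
    rw [hηdef]; linarith
  refine ⟨c₁ * ∑' k : ℕ, (k:ℝ) ^ (-(σ - η)), mul_nonneg hc₁0 (tsum_nonneg fun k =>
    Real.rpow_nonneg (Nat.cast_nonneg _) _), fun P hPprime => ?_⟩
  calc ∑ p ∈ P, (Ideal.absNorm p : ℝ) ^ (-σ)
      = ∑ k ∈ P.image Ideal.absNorm,
          (P.filter (fun p => Ideal.absNorm p = k)).card • ((k:ℝ) ^ (-σ)) :=
        Finset.sum_comp (fun k : ℕ => (k:ℝ) ^ (-σ)) Ideal.absNorm
    _ ≤ ∑ k ∈ P.image Ideal.absNorm, c₁ * (k:ℝ) ^ (-(σ - η)) := by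
        refine Finset.sum_le_sum fun k hk => ?_
        rw [Finset.mem_image] at hk
        obtain ⟨p₀, hp₀, rfl⟩ := hk
        set k := Ideal.absNorm p₀
        have hk2 : 2 ≤ k := two_le_absNorm (hPprime p₀ hp₀)
        have hkpos : (0:ℝ) < (k:ℝ) := by exact_mod_cast Nat.lt_of_lt_of_le Nat.zero_lt_two hk2
        rw [nsmul_eq_mul]
        calc ((P.filter (fun p => Ideal.absNorm p = k)).card : ℝ) * ((k:ℝ) ^ (-σ))
            ≤ (c₁ * (k:ℝ) ^ η) * ((k:ℝ) ^ (-σ)) :=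
              mul_le_mul_of_nonneg_right (card_norm_bound hη P hPprime hk2)
                (Real.rpow_nonneg hkpos.le _)
          _ = c₁ * (k:ℝ) ^ (-(σ - η)) := by
              rw [mul_assoc, ← Real.rpow_add hkpos]
              congr 1
              ring_nf
    _ = c₁ * ∑ k ∈ P.image Ideal.absNorm, (k:ℝ) ^ (-(σ - η)) := by rw [Finset.mul_sum]
    _ ≤ c₁ * ∑' k : ℕ, (k:ℝ) ^ (-(σ - η)) := by
        refine mul_le_mul_of_nonneg_left ?_ hc₁0
        exact Summable.sum_le_tsum _ (fun k _ => Real.rpow_nonneg (Nat.cast_nonneg _) _) hsummable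

lemma exists_zeta_bound [CharZero S] {σ : ℝ} (hσ : 1 < σ) :
    ∃ Z : ℝ, 1 ≤ Z ∧ ∀ B : Finset (Ideal S), (∀ b ∈ B, b ≠ ⊥) →
      ∑ b ∈ B, (Ideal.absNorm b : ℝ) ^ (-σ) ≤ Z := by
  classical
  obtain ⟨S0, hS0, hP2⟩ := exists_primeSum_bound (S := S) hσ
  refine ⟨Real.exp (2 * S0), Real.one_le_exp (by linarith), fun B hB => ?_⟩
  refine (sum_rpow_le_prod (by linarith) B hB).trans ?_
  set P := B.biUnion (fun b => (normalizedFactors b).toFinset) with hP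
  have hPprime : ∀ p ∈ P, Prime p := by
    intro p hp
    rw [hP, Finset.mem_biUnion] at hp
    obtain ⟨b, hb, hpb⟩ := hp
    exact prime_of_normalized_factor _ (Multiset.mem_toFinset.mp hpb)
  have hxhalf : ∀ p ∈ P, (Ideal.absNorm p : ℝ) ^ (-σ) ≤ 1/2 := by
    intro p hp
    have h2 : (2:ℝ) ≤ (Ideal.absNorm p : ℝ) := by exact_mod_cast two_le_absNorm (hPprime p hp)
    calc (Ideal.absNorm p : ℝ) ^ (-σ) ≤ (2:ℝ) ^ (-σ) :=
          Real.rpow_le_rpow_of_nonpos (by norm_num) h2 (by linarith)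
      _ ≤ (2:ℝ) ^ (-1:ℝ) := Real.rpow_le_rpow_of_exponent_le one_le_two (by linarith)
      _ = 1/2 := by rw [Real.rpow_neg_one]; norm_num
  have hx0 : ∀ p : Ideal S, 0 ≤ (Ideal.absNorm p : ℝ) ^ (-σ) :=
    fun p => Real.rpow_nonneg (Nat.cast_nonneg _) _
  calc ∏ p ∈ P, (1 - (Ideal.absNorm p : ℝ) ^ (-σ))⁻¹
      ≤ ∏ p ∈ P, Real.exp (2 * ((Ideal.absNorm p : ℝ) ^ (-σ))) := by
        refine Finset.prod_le_prod (fun p hp => ?_) (fun p hp => ?_)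
        · have := hxhalf p hp
          have h0 := hx0 p
          exact inv_nonneg.mpr (by linarith)
        · have h1 := inv_one_sub_le_of_le_half (hx0 p) (hxhalf p hp)
          refine h1.trans ?_
          have := Real.add_one_le_exp (2 * ((Ideal.absNorm p : ℝ) ^ (-σ)))
          linarith
    _ = Real.exp (∑ p ∈ P, 2 * ((Ideal.absNorm p : ℝ) ^ (-σ))) := (Real.exp_sum _ _).symm
    _ ≤ Real.exp (2 * S0) := by
        rw [Real.exp_le_exp, ← Finset.mul_sum]
        exact mul_le_mul_of_nonneg_left (hP2 P hPprime) (by norm_num)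

lemma exists_divisor_bound [CharZero S] {δ : ℝ} (hδ0 : 0 < δ) (hδ1 : δ < 1/2) :
    ∃ C2 : ℝ, 0 < C2 ∧ ∀ (g : Ideal S), g ≠ ⊥ → ∀ D : Finset (Ideal S), (∀ d ∈ D, d ∣ g) →
      ∑ d ∈ D, (Ideal.absNorm d : ℝ) ^ (-(1 - δ)) ≤ C2 * (Ideal.absNorm g : ℝ) ^ δ := by
  classical
  set T : ℝ := max 4 ((2:ℝ) ^ (δ⁻¹)) with hT
  set t0 : ℕ := ⌈T⌉₊ with ht0
  have hfin := Ideal.finite_setOf_absNorm_le (S := S) t0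
  set K := hfin.toFinset.card with hK
  refine ⟨4 ^ K, by positivity, fun g hg D hD => ?_⟩
  have hDne : ∀ d ∈ D, d ≠ ⊥ := by
    intro d hd h
    obtain ⟨c, hc⟩ := hD d hd
    exact hg (by rw [hc, h, ← Ideal.zero_eq_bot, zero_mul])
  refine (sum_rpow_le_prod (by linarith : (0:ℝ) < 1 - δ) D hDne).trans ?_
  set P := D.biUnion (fun b => (normalizedFactors b).toFinset) with hP
  have hPprime : ∀ p ∈ P, Prime p := by
    intro p hp
    rw [hP, Finset.mem_biUnion] at hp
    obtain ⟨b, hb, hpb⟩ := hp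
    exact prime_of_normalized_factor _ (Multiset.mem_toFinset.mp hpb)
  have hPdvd : ∀ p ∈ P, p ∣ g := by
    intro p hp
    rw [hP, Finset.mem_biUnion] at hp
    obtain ⟨b, hb, hpb⟩ := hp
    exact (dvd_of_mem_normalizedFactors (Multiset.mem_toFinset.mp hpb)).trans (hD b hb)
  have hx0 : ∀ p : Ideal S, 0 ≤ (Ideal.absNorm p : ℝ) ^ (-(1-δ)) :=
    fun p => Real.rpow_nonneg (Nat.cast_nonneg _) _
  have hinv0 : ∀ p ∈ P, 0 ≤ (1 - (Ideal.absNorm p : ℝ) ^ (-(1-δ)))⁻¹ := by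
    intro p hp
    refine inv_nonneg.mpr ?_
    have h1 : (Ideal.absNorm p : ℝ) ^ (-(1-δ)) < 1 := by
      refine Real.rpow_lt_one_of_one_lt_of_neg ?_ (by linarith)
      exact_mod_cast lt_of_lt_of_le one_lt_two (by exact_mod_cast two_le_absNorm (hPprime p hp))
    linarith
  -- small prime factor bound
  have hsmallx : ∀ p ∈ P, (Ideal.absNorm p : ℝ) ^ (-(1-δ)) ≤ 3/4 := by
    intro p hp
    have h2 : (2:ℝ) ≤ (Ideal.absNorm p : ℝ) := by exact_mod_cast two_le_absNorm (hPprime p hp)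
    have ha : (Ideal.absNorm p : ℝ) ^ (-(1-δ)) ≤ (2:ℝ) ^ (-(1-δ)) :=
      Real.rpow_le_rpow_of_nonpos (by norm_num) h2 (by linarith)
    have hb : (2:ℝ) ^ (-(1-δ)) ≤ (2:ℝ) ^ (-(1/2) : ℝ) :=
      Real.rpow_le_rpow_of_exponent_le one_le_two (by linarith)
    have hc : (2:ℝ) ^ (-(1/2) : ℝ) ≤ 3/4 := by
      have h1 : ((2:ℝ) ^ (-(1/2):ℝ)) ^ (2:ℕ) = 1/2 := by
        rw [← Real.rpow_natCast ((2:ℝ) ^ (-(1/2):ℝ)) 2, ← Real.rpow_mul (by norm_num)]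
        norm_num
      nlinarith [Real.rpow_nonneg (by norm_num : (0:ℝ) ≤ 2) (-(1/2):ℝ)]
    linarith
  -- large prime factor bound
  have hbig : ∀ p ∈ P, T ≤ (Ideal.absNorm p : ℝ) →
      (1 - (Ideal.absNorm p : ℝ) ^ (-(1-δ)))⁻¹ ≤ (Ideal.absNorm p : ℝ) ^ δ := by
    intro p hp hTle
    set z : ℝ := (Ideal.absNorm p : ℝ) with hz
    have hz4 : (4:ℝ) ≤ z := le_trans (le_max_left _ _) hTle
    have hz0 : (0:ℝ) < z := by linarith
    have hz1 : (1:ℝ) ≤ z := by linarith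
    set y : ℝ := z ^ δ with hy
    have hy0 : 0 ≤ y := Real.rpow_nonneg hz0.le δ
    have hy2 : (2:ℝ) ≤ y := by
      have h2z : (2:ℝ) ^ (δ⁻¹) ≤ z := le_trans (le_max_right _ _) hTle
      calc (2:ℝ) = ((2:ℝ) ^ (δ⁻¹)) ^ δ := by
            rw [← Real.rpow_mul (by norm_num), inv_mul_cancel₀ (ne_of_gt hδ0), Real.rpow_one]
        _ ≤ z ^ δ := Real.rpow_le_rpow (by positivity) h2z hδ0.le
    have hxyz : z ^ (-(1-δ)) = y / z := by
      rw [show -(1-δ) = δ + (-1) by ring, Real.rpow_add hz0, Real.rpow_neg_one, div_eq_mul_inv]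
    set w : ℝ := z ^ ((1:ℝ)/2) with hw
    have hw0 : 0 ≤ w := Real.rpow_nonneg hz0.le _
    have hw2 : w ^ (2:ℕ) = z := by
      rw [hw, ← Real.rpow_natCast (z ^ ((1:ℝ)/2)) 2, ← Real.rpow_mul hz0.le]
      norm_num
    have hwge2 : (2:ℝ) ≤ w := by nlinarith
    have hyw : y ≤ w := Real.rpow_le_rpow_of_exponent_le hz1 (by linarith)
    have hxhalf : z ^ (-(1-δ)) ≤ 1/2 := by
      rw [hxyz, div_le_iff₀ hz0]
      nlinarith
    calc (1 - z ^ (-(1-δ)))⁻¹ ≤ 1 + 2 * (z ^ (-(1-δ))) :=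
          inv_one_sub_le_of_le_half (Real.rpow_nonneg hz0.le _) hxhalf
      _ ≤ y := by
          rw [hxyz]
          have hdiv : y / z ≤ y / 4 := div_le_div_of_nonneg_left hy0 (by norm_num) hz4
          have : y / z ≤ y / 4 := hdiv
          nlinarith
  -- split the product
  rw [← Finset.prod_filter_mul_prod_filter_not P (fun p => T ≤ (Ideal.absNorm p : ℝ))]
  have hlarge : ∏ p ∈ P.filter (fun p => T ≤ (Ideal.absNorm p : ℝ)),
      (1 - (Ideal.absNorm p : ℝ) ^ (-(1-δ)))⁻¹ ≤ (Ideal.absNorm g : ℝ) ^ δ := by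
    calc ∏ p ∈ P.filter (fun p => T ≤ (Ideal.absNorm p : ℝ)),
        (1 - (Ideal.absNorm p : ℝ) ^ (-(1-δ)))⁻¹
        ≤ ∏ p ∈ P.filter (fun p => T ≤ (Ideal.absNorm p : ℝ)), (Ideal.absNorm p : ℝ) ^ δ := by
          refine Finset.prod_le_prod (fun p hp => hinv0 p (Finset.filter_subset _ _ hp))
            (fun p hp => ?_)
          rw [Finset.mem_filter] at hp
          exact hbig p hp.1 hp.2
      _ = (∏ p ∈ P.filter (fun p => T ≤ (Ideal.absNorm p : ℝ)), (Ideal.absNorm p : ℝ)) ^ δ :=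
          Real.finset_prod_rpow _ _ (fun p _ => Nat.cast_nonneg _) δ
      _ ≤ (Ideal.absNorm g : ℝ) ^ δ := by
          refine Real.rpow_le_rpow (Finset.prod_nonneg fun p _ => Nat.cast_nonneg _) ?_ hδ0.le
          have hdvdprod : (∏ p ∈ P.filter (fun p => T ≤ (Ideal.absNorm p : ℝ)), p) ∣ g :=
            Finset.prod_primes_dvd g
              (fun p hp => hPprime p (Finset.filter_subset _ _ hp))
              (fun p hp => hPdvd p (Finset.filter_subset _ _ hp))
          have hnormdvd : Ideal.absNorm (∏ p ∈ P.filter (fun p => T ≤ (Ideal.absNorm p : ℝ)), p)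
              ∣ Ideal.absNorm g := map_dvd Ideal.absNorm hdvdprod
          have hgpos : 0 < Ideal.absNorm g := by
            have : Ideal.absNorm g ≠ 0 := by rwa [Ne, Ideal.absNorm_eq_zero_iff]
            omega
          have := Nat.le_of_dvd hgpos hnormdvd
          rw [map_prod] at this
          exact_mod_cast this
  have hsmall : ∏ p ∈ P.filter (fun p => ¬ T ≤ (Ideal.absNorm p : ℝ)),
      (1 - (Ideal.absNorm p : ℝ) ^ (-(1-δ)))⁻¹ ≤ 4 ^ K := by
    calc ∏ p ∈ P.filter (fun p => ¬ T ≤ (Ideal.absNorm p : ℝ)),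
        (1 - (Ideal.absNorm p : ℝ) ^ (-(1-δ)))⁻¹
        ≤ ∏ _p ∈ P.filter (fun p => ¬ T ≤ (Ideal.absNorm p : ℝ)), (4:ℝ) := by
          refine Finset.prod_le_prod (fun p hp => hinv0 p (Finset.filter_subset _ _ hp))
            (fun p hp => inv_one_sub_le_four (hx0 p) (hsmallx p (Finset.filter_subset _ _ hp)))
      _ = (4:ℝ) ^ (P.filter (fun p => ¬ T ≤ (Ideal.absNorm p : ℝ))).card := by
          rw [Finset.prod_const]
      _ ≤ (4:ℝ) ^ K := by
          refine pow_le_pow_right₀ (by norm_num) ?_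
          refine Finset.card_le_card ?_
          intro p hp
          rw [Finset.mem_filter] at hp
          rw [Set.Finite.mem_toFinset]
          have : (Ideal.absNorm p : ℝ) < T := lt_of_not_ge hp.2
          have h2 : (Ideal.absNorm p : ℝ) < (t0:ℝ) := lt_of_lt_of_le this (Nat.le_ceil T)
          exact le_of_lt (by exact_mod_cast h2)
  calc (∏ p ∈ P.filter (fun p => T ≤ (Ideal.absNorm p : ℝ)),
        (1 - (Ideal.absNorm p : ℝ) ^ (-(1-δ)))⁻¹) *
      (∏ p ∈ P.filter (fun p => ¬ T ≤ (Ideal.absNorm p : ℝ)),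
        (1 - (Ideal.absNorm p : ℝ) ^ (-(1-δ)))⁻¹)
      ≤ (Ideal.absNorm g : ℝ) ^ δ * 4 ^ K := by
        refine mul_le_mul hlarge hsmall (Finset.prod_nonneg fun p hp =>
          hinv0 p (Finset.filter_subset _ _ hp)) (Real.rpow_nonneg (Nat.cast_nonneg _) δ)
    _ = 4 ^ K * (Ideal.absNorm g : ℝ) ^ δ := by ring

end Ded

end Stmt12Aux


open Stmt12Aux in
/-- Bound for a sum over ideals contained in `𝔮` of `N(gcd(𝔪,𝔫,𝔠))^{1/2} N(𝔠)^{-3/2+δ}`. -/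
theorem stmt_12 (F : Type*) [Field F] [NumberField F] (δ : ℝ) (hδ0 : 0 < δ) (hδ1 : δ < 1 / 2) :
    ∃ C : ℝ, 0 < C ∧ ∀ q m n : Ideal (NumberField.RingOfIntegers F),
      q ≠ ⊥ → m ≠ ⊥ → n ≠ ⊥ →
      (∑' c : {c : Ideal (NumberField.RingOfIntegers F) // c ≤ q ∧ c ≠ ⊥},
          (Ideal.absNorm (m ⊔ n ⊔ (c : Ideal (NumberField.RingOfIntegers F))) : ℝ) ^ ((1 : ℝ) / 2) /
            (Ideal.absNorm (c : Ideal (NumberField.RingOfIntegers F)) : ℝ) ^ ((3 : ℝ) / 2 - δ)) ≤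
        C * ((Ideal.absNorm (m ⊔ n ⊔ q) : ℝ) ^ ((1 : ℝ) / 2) /
              (Ideal.absNorm q : ℝ) ^ ((3 : ℝ) / 2 - δ)) *
          (Ideal.absNorm (m ⊔ n) : ℝ) ^ δ := by
  classical
  obtain ⟨Z, hZ1, hZbound⟩ := exists_zeta_bound (S := NumberField.RingOfIntegers F)
    (σ := (3:ℝ)/2 - δ) (by linarith)
  obtain ⟨C2, hC2pos, hC2bound⟩ := exists_divisor_bound (S := NumberField.RingOfIntegers F)
    (δ := δ) hδ0 hδ1
  have hZ0 : (0:ℝ) < Z := lt_of_lt_of_le one_pos hZ1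
  refine ⟨C2 * Z, by positivity, fun q m n hq hm hn => ?_⟩
  set σ : ℝ := (3:ℝ)/2 - δ with hσdef
  set g : Ideal (NumberField.RingOfIntegers F) := m ⊔ n with hgdef
  have hgbot : g ≠ ⊥ := by
    rw [hgdef]
    intro h
    exact hm (sup_eq_bot_iff.mp h).1
  have hnormpos : ∀ I : Ideal (NumberField.RingOfIntegers F), I ≠ ⊥ →
      (0:ℝ) < (Ideal.absNorm I : ℝ) := by
    intro I hI
    have : Ideal.absNorm I ≠ 0 := by rwa [Ne, Ideal.absNorm_eq_zero_iff]
    exact_mod_cast Nat.pos_of_ne_zero this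
  -- the inner finite sum bound
  have hdvdch : ∀ a : Ideal (NumberField.RingOfIntegers F), (g ⊔ a) ∣ a :=
    fun a => Ideal.dvd_iff_le.mpr le_sup_right
  have hinner : ∀ F' : Finset (Ideal (NumberField.RingOfIntegers F)), (∀ a ∈ F', a ≠ ⊥) →
      ∑ a ∈ F', (Ideal.absNorm (g ⊔ a) : ℝ) ^ ((1:ℝ)/2) * (Ideal.absNorm a : ℝ) ^ (-σ)
        ≤ C2 * (Ideal.absNorm g : ℝ) ^ δ * Z := by
    intro F' hF'
    have hga0 : ∀ a : Ideal (NumberField.RingOfIntegers F), g ⊔ a ≠ ⊥ := by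
      intro a h
      exact hgbot (sup_eq_bot_iff.mp h).1
    have hch0 : ∀ a ∈ F', (hdvdch a).choose ≠ ⊥ := by
      intro a ha h
      apply hF' a ha
      have := (hdvdch a).choose_spec
      rw [h, ← Ideal.zero_eq_bot, mul_zero] at this
      rwa [Ideal.zero_eq_bot] at this
    have hterm : ∀ a ∈ F',
        (Ideal.absNorm (g ⊔ a) : ℝ) ^ ((1:ℝ)/2) * (Ideal.absNorm a : ℝ) ^ (-σ)
          = (Ideal.absNorm (g ⊔ a) : ℝ) ^ (-(1-δ)) *
              (Ideal.absNorm ((hdvdch a).choose) : ℝ) ^ (-σ) := by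
      intro a ha
      have hdpos : (0:ℝ) < (Ideal.absNorm (g ⊔ a) : ℝ) := hnormpos _ (hga0 a)
      have hbpos : (0:ℝ) < (Ideal.absNorm ((hdvdch a).choose) : ℝ) := hnormpos _ (hch0 a ha)
      have hNa : (Ideal.absNorm a : ℝ) =
          (Ideal.absNorm (g ⊔ a) : ℝ) * (Ideal.absNorm ((hdvdch a).choose) : ℝ) := by
        conv_lhs => rw [(hdvdch a).choose_spec]
        rw [map_mul]
        push_cast
        ring
      rw [hNa, Real.mul_rpow hdpos.le hbpos.le, ← mul_assoc, ← Real.rpow_add hdpos]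
      congr 2
      rw [hσdef]
      ring
    rw [Finset.sum_congr rfl hterm]
    set ψ : Ideal (NumberField.RingOfIntegers F) →
        Ideal (NumberField.RingOfIntegers F) × Ideal (NumberField.RingOfIntegers F) :=
      fun a => (g ⊔ a, (hdvdch a).choose) with hψ
    have hinj : ∀ x ∈ F', ∀ y ∈ F', ψ x = ψ y → x = y := by
      intro x hx y hy h
      have h1 : g ⊔ x = g ⊔ y := congrArg Prod.fst h
      have h2 : (hdvdch x).choose = (hdvdch y).choose := congrArg Prod.snd h
      rw [(hdvdch x).choose_spec, (hdvdch y).choose_spec]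
      exact congrArg₂ (· * ·) h1 h2
    have himg : F'.image ψ ⊆ (F'.image (fun a => g ⊔ a)) ×ˢ
        (F'.image (fun a => (hdvdch a).choose)) := by
      intro x hx
      rw [Finset.mem_image] at hx
      obtain ⟨a, ha, rfl⟩ := hx
      exact Finset.mem_product.mpr ⟨Finset.mem_image_of_mem _ ha, Finset.mem_image_of_mem _ ha⟩
    calc ∑ a ∈ F', (Ideal.absNorm (g ⊔ a) : ℝ) ^ (-(1-δ)) *
          (Ideal.absNorm ((hdvdch a).choose) : ℝ) ^ (-σ)
        = ∑ x ∈ F'.image ψ, (Ideal.absNorm x.1 : ℝ) ^ (-(1-δ)) *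
            (Ideal.absNorm x.2 : ℝ) ^ (-σ) := by
          exact (Finset.sum_image (g := ψ)
            (f := fun x : Ideal (NumberField.RingOfIntegers F) ×
              Ideal (NumberField.RingOfIntegers F) =>
              (Ideal.absNorm x.1 : ℝ) ^ (-(1-δ)) * (Ideal.absNorm x.2 : ℝ) ^ (-σ)) hinj).symm
      _ ≤ ∑ x ∈ (F'.image (fun a => g ⊔ a)) ×ˢ (F'.image (fun a => (hdvdch a).choose)),
            (Ideal.absNorm x.1 : ℝ) ^ (-(1-δ)) * (Ideal.absNorm x.2 : ℝ) ^ (-σ) := by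
          refine Finset.sum_le_sum_of_subset_of_nonneg himg fun x _ _ => ?_
          exact mul_nonneg (Real.rpow_nonneg (Nat.cast_nonneg _) _)
            (Real.rpow_nonneg (Nat.cast_nonneg _) _)
      _ = (∑ d ∈ F'.image (fun a => g ⊔ a), (Ideal.absNorm d : ℝ) ^ (-(1-δ))) *
            (∑ b ∈ F'.image (fun a => (hdvdch a).choose), (Ideal.absNorm b : ℝ) ^ (-σ)) := by
          rw [Finset.sum_product]
          rw [Finset.sum_mul_sum]
      _ ≤ (C2 * (Ideal.absNorm g : ℝ) ^ δ) * Z := by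
          refine mul_le_mul ?_ ?_ ?_ ?_
          · refine hC2bound g hgbot _ ?_
            intro d hd
            rw [Finset.mem_image] at hd
            obtain ⟨a, ha, rfl⟩ := hd
            exact Ideal.dvd_iff_le.mpr le_sup_left
          · refine hZbound _ ?_
            intro b hb
            rw [Finset.mem_image] at hb
            obtain ⟨a, ha, rfl⟩ := hb
            exact hch0 a ha
          · exact Finset.sum_nonneg fun b _ => Real.rpow_nonneg (Nat.cast_nonneg _) _
          · positivity
      _ = C2 * (Ideal.absNorm g : ℝ) ^ δ * Z := by ring
  by_cases hsum : Summable (fun c : {c : Ideal (NumberField.RingOfIntegers F) // c ≤ q ∧ c ≠ ⊥} =>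
      (Ideal.absNorm (g ⊔ (c : Ideal (NumberField.RingOfIntegers F))) : ℝ) ^ ((1 : ℝ) / 2) /
        (Ideal.absNorm (c : Ideal (NumberField.RingOfIntegers F)) : ℝ) ^ σ)
  · refine Summable.tsum_le_of_sum_le hsum ?_
    intro Fs
    have hqdvd : ∀ c : {c : Ideal (NumberField.RingOfIntegers F) // c ≤ q ∧ c ≠ ⊥},
        q ∣ (c : Ideal (NumberField.RingOfIntegers F)) :=
      fun c => Ideal.dvd_iff_le.mpr c.2.1
    have hav0 : ∀ c, (hqdvd c).choose ≠ ⊥ := by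
      intro c h
      apply c.2.2
      have := (hqdvd c).choose_spec
      rw [h, Ideal.mul_bot] at this
      exact this
    have hgq0 : g ⊔ q ≠ ⊥ := by
      intro h
      exact hgbot (sup_eq_bot_iff.mp h).1
    have hterm2 : ∀ c ∈ Fs,
        (Ideal.absNorm (g ⊔ (c : Ideal (NumberField.RingOfIntegers F))) : ℝ) ^ ((1 : ℝ) / 2) /
            (Ideal.absNorm (c : Ideal (NumberField.RingOfIntegers F)) : ℝ) ^ σ
          ≤ ((Ideal.absNorm (g ⊔ q) : ℝ) ^ ((1 : ℝ) / 2) / (Ideal.absNorm q : ℝ) ^ σ) *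
            ((Ideal.absNorm (g ⊔ (hqdvd c).choose) : ℝ) ^ ((1 : ℝ) / 2) *
              (Ideal.absNorm ((hqdvd c).choose) : ℝ) ^ (-σ)) := by
      intro c _
      set a : Ideal (NumberField.RingOfIntegers F) := (hqdvd c).choose with hadef
      have hspec : (c : Ideal (NumberField.RingOfIntegers F)) = q * a := by
        rw [hadef]
        exact (hqdvd c).choose_spec
      clear_value a
      have ha0 : a ≠ ⊥ := by rw [hadef]; exact hav0 c
      have hga0 : g ⊔ a ≠ ⊥ := by
        intro h
        exact hgbot (sup_eq_bot_iff.mp h).1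
      have hqpos : (0:ℝ) < (Ideal.absNorm q : ℝ) := hnormpos _ hq
      have hapos : (0:ℝ) < (Ideal.absNorm a : ℝ) := hnormpos _ ha0
      have hle : (g ⊔ q) * (g ⊔ a) ≤ g ⊔ q * a := by
        rw [Ideal.sup_mul]
        refine sup_le ?_ ?_
        · exact le_trans Ideal.mul_le_left le_sup_left
        · rw [Ideal.mul_sup]
          refine sup_le ?_ le_sup_right
          exact le_trans Ideal.mul_le_right le_sup_left
      have hprodne : (g ⊔ q) * (g ⊔ a) ≠ (0 : Ideal (NumberField.RingOfIntegers F)) := by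
        rw [Ideal.zero_eq_bot]
        refine mul_ne_zero ?_ ?_ <;> rw [Ne, ← Ideal.zero_eq_bot] at *
        · simpa [Ideal.zero_eq_bot] using hgq0
        · simpa [Ideal.zero_eq_bot] using hga0
      have hkey : Ideal.absNorm (g ⊔ q * a) ≤ Ideal.absNorm (g ⊔ q) * Ideal.absNorm (g ⊔ a) := by
        have hpos : 0 < Ideal.absNorm ((g ⊔ q) * (g ⊔ a)) := by
          have : Ideal.absNorm ((g ⊔ q) * (g ⊔ a)) ≠ 0 := by
            rw [Ne, Ideal.absNorm_eq_zero_iff, ← Ideal.zero_eq_bot]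
            exact hprodne
          omega
        have := Nat.le_of_dvd hpos (map_dvd Ideal.absNorm (Ideal.dvd_iff_le.mpr hle))
        rwa [map_mul] at this
      have hnum : (Ideal.absNorm (g ⊔ q * a) : ℝ) ^ ((1 : ℝ) / 2) ≤
          (Ideal.absNorm (g ⊔ q) : ℝ) ^ ((1 : ℝ) / 2) *
            (Ideal.absNorm (g ⊔ a) : ℝ) ^ ((1 : ℝ) / 2) := by
        rw [← Real.mul_rpow (Nat.cast_nonneg _) (Nat.cast_nonneg _)]
        refine Real.rpow_le_rpow (Nat.cast_nonneg _) ?_ (by norm_num)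
        exact_mod_cast hkey
      have hden : (Ideal.absNorm (q * a) : ℝ) ^ σ =
          (Ideal.absNorm q : ℝ) ^ σ * (Ideal.absNorm a : ℝ) ^ σ := by
        rw [map_mul]
        push_cast
        rw [Real.mul_rpow hqpos.le hapos.le]
      have hdenpos : (0:ℝ) < (Ideal.absNorm q : ℝ) ^ σ * (Ideal.absNorm a : ℝ) ^ σ := by
        exact mul_pos (Real.rpow_pos_of_pos hqpos σ) (Real.rpow_pos_of_pos hapos σ)
      rw [hspec, hden]
      calc (Ideal.absNorm (g ⊔ q * a) : ℝ) ^ ((1 : ℝ) / 2) /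
            ((Ideal.absNorm q : ℝ) ^ σ * (Ideal.absNorm a : ℝ) ^ σ)
          ≤ ((Ideal.absNorm (g ⊔ q) : ℝ) ^ ((1 : ℝ) / 2) *
              (Ideal.absNorm (g ⊔ a) : ℝ) ^ ((1 : ℝ) / 2)) /
            ((Ideal.absNorm q : ℝ) ^ σ * (Ideal.absNorm a : ℝ) ^ σ) :=
            (div_le_div_iff_of_pos_right hdenpos).mpr hnum
        _ = ((Ideal.absNorm (g ⊔ q) : ℝ) ^ ((1 : ℝ) / 2) / (Ideal.absNorm q : ℝ) ^ σ) *
              ((Ideal.absNorm (g ⊔ a) : ℝ) ^ ((1 : ℝ) / 2) / (Ideal.absNorm a : ℝ) ^ σ) :=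
            (div_mul_div_comm _ _ _ _).symm
        _ = ((Ideal.absNorm (g ⊔ q) : ℝ) ^ ((1 : ℝ) / 2) / (Ideal.absNorm q : ℝ) ^ σ) *
              ((Ideal.absNorm (g ⊔ a) : ℝ) ^ ((1 : ℝ) / 2) *
                (Ideal.absNorm a : ℝ) ^ (-σ)) := by
            rw [div_eq_mul_inv ((Ideal.absNorm (g ⊔ a) : ℝ) ^ ((1 : ℝ) / 2)),
              ← Real.rpow_neg (Nat.cast_nonneg _)]
    have havinj : ∀ x ∈ Fs, ∀ y ∈ Fs, (hqdvd x).choose = (hqdvd y).choose → x = y := by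
      intro x _ y _ h
      have hx := (hqdvd x).choose_spec
      have hy := (hqdvd y).choose_spec
      refine Subtype.ext ?_
      rw [hx, hy, h]
    calc ∑ c ∈ Fs,
          (Ideal.absNorm (g ⊔ (c : Ideal (NumberField.RingOfIntegers F))) : ℝ) ^ ((1 : ℝ) / 2) /
            (Ideal.absNorm (c : Ideal (NumberField.RingOfIntegers F)) : ℝ) ^ σ
        ≤ ∑ c ∈ Fs, ((Ideal.absNorm (g ⊔ q) : ℝ) ^ ((1 : ℝ) / 2) / (Ideal.absNorm q : ℝ) ^ σ) *
            ((Ideal.absNorm (g ⊔ (hqdvd c).choose) : ℝ) ^ ((1 : ℝ) / 2) *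
              (Ideal.absNorm ((hqdvd c).choose) : ℝ) ^ (-σ)) := Finset.sum_le_sum hterm2
      _ = ((Ideal.absNorm (g ⊔ q) : ℝ) ^ ((1 : ℝ) / 2) / (Ideal.absNorm q : ℝ) ^ σ) *
            ∑ c ∈ Fs, ((Ideal.absNorm (g ⊔ (hqdvd c).choose) : ℝ) ^ ((1 : ℝ) / 2) *
              (Ideal.absNorm ((hqdvd c).choose) : ℝ) ^ (-σ)) := by
          rw [Finset.mul_sum]
      _ = ((Ideal.absNorm (g ⊔ q) : ℝ) ^ ((1 : ℝ) / 2) / (Ideal.absNorm q : ℝ) ^ σ) *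
            ∑ a ∈ Fs.image (fun c => (hqdvd c).choose),
              ((Ideal.absNorm (g ⊔ a) : ℝ) ^ ((1 : ℝ) / 2) *
                (Ideal.absNorm a : ℝ) ^ (-σ)) := by
          rw [Finset.sum_image (g := fun c => (hqdvd c).choose)
            (f := fun a => (Ideal.absNorm (g ⊔ a) : ℝ) ^ ((1 : ℝ) / 2) *
              (Ideal.absNorm a : ℝ) ^ (-σ)) havinj]
      _ ≤ ((Ideal.absNorm (g ⊔ q) : ℝ) ^ ((1 : ℝ) / 2) / (Ideal.absNorm q : ℝ) ^ σ) *
            (C2 * (Ideal.absNorm g : ℝ) ^ δ * Z) := by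
          refine mul_le_mul_of_nonneg_left ?_ (by positivity)
          refine hinner _ ?_
          intro a ha
          rw [Finset.mem_image] at ha
          obtain ⟨c, hc, rfl⟩ := ha
          exact hav0 c
      _ = C2 * Z * ((Ideal.absNorm (g ⊔ q) : ℝ) ^ ((1 : ℝ) / 2) / (Ideal.absNorm q : ℝ) ^ σ) *
            (Ideal.absNorm g : ℝ) ^ δ := by ring
  · rw [tsum_eq_zero_of_not_summable hsum]
    have h1 : (0:ℝ) ≤ (Ideal.absNorm (g ⊔ q) : ℝ) ^ ((1 : ℝ) / 2) /
        (Ideal.absNorm q : ℝ) ^ σ := by positivity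
    have h2 : (0:ℝ) ≤ (Ideal.absNorm g : ℝ) ^ δ := by positivity
    have h3 : (0:ℝ) ≤ C2 * Z := by positivity
    exact mul_nonneg (mul_nonneg h3 h1) h2
end
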